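/- arXiv:2511.13461 — 4 statements merged into one kernel-verified Lean document; each statement's English description precedes it below -/
import Mathlib

section
/- Let φ : ℝ^d → ℝ be radial, continuous, bounded, with φ(r) → 0 as r → ∞, ∫₀^∞ |log(r) φ'(r)| dr < ∞, lim_{r→0⁺}(φ(r)-φ(0)) log r = 0, and lim_{r→∞} φ(r) log r = 0. Then for every x ≠ 0, lim_{T→∞} ( ∫₀^T t^{-1} φ(|x|/t) dt − C_{φ,T} ) = −φ(0) log|x|, where C_{φ,T} := φ(0) log T − ∫₀^∞ log(r) φ'(r) dr. -/
open MeasureTheory Filter Set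
open scoped ENNReal

section Aux

variable {ψ ψ' : ℝ → ℝ}

/-- Integrability of `ψ r / r` on `(ε, ∞)` via a Tonelli argument. -/
lemma aux_integrableOn_div (hcont : Continuous ψ)
    (hderiv : ∀ r : ℝ, 0 < r → HasDerivAt ψ (ψ' r) r)
    (hint : IntegrableOn (fun r => |Real.log r * ψ' r|) (Ioi 0))
    (hlim : Tendsto ψ atTop (nhds 0)) {ε : ℝ} (hε : 0 < ε) :
    IntegrableOn (fun r => ψ r / r) (Ioi ε) := by
  set c := Real.exp 1 with hcdef
  have hc0 : (0:ℝ) < c := Real.exp_pos 1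
  have hc1 : (1:ℝ) < c := by
    have h := Real.add_one_le_exp (1:ℝ); linarith
  set D := deriv ψ with hDdef
  have hDmeas : Measurable D := measurable_deriv ψ
  have hDeq : ∀ s : ℝ, 0 < s → D s = ψ' s := fun s hs => (hderiv s hs).deriv
  have habs : IntegrableOn (fun s => |Real.log s * D s|) (Ioi 0) :=
    hint.congr_fun (fun s hs => by rw [hDeq s hs]) measurableSet_Ioi
  have hlogD_meas : AEStronglyMeasurable (fun s => Real.log s * D s)
      (volume.restrict (Ioi (0:ℝ))) :=
    (Real.measurable_log.mul hDmeas).aestronglyMeasurable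
  have hlogD_int : IntegrableOn (fun s => Real.log s * D s) (Ioi 0) := by
    refine (integrable_norm_iff hlogD_meas).mp ?_
    simpa only [Real.norm_eq_abs, IntegrableOn] using habs
  have hD_int : ∀ r, c ≤ r → IntegrableOn D (Ioi r) := by
    intro r hr
    have hsub : Ioi r ⊆ Ioi (0:ℝ) := Ioi_subset_Ioi (le_of_lt (lt_of_lt_of_le hc0 hr))
    refine Integrable.mono (habs.mono_set hsub) hDmeas.aestronglyMeasurable.restrict ?_
    refine (ae_restrict_iff' measurableSet_Ioi).mpr (ae_of_all _ fun s hs => ?_)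
    have hs1 : (1:ℝ) ≤ Real.log s := by
      rw [Real.le_log_iff_exp_le (lt_trans hc0 (lt_of_le_of_lt hr hs))]
      exact le_of_lt (lt_of_le_of_lt hr hs)
    have : |D s| ≤ |Real.log s| * |D s| :=
      le_mul_of_one_le_left (abs_nonneg _) (le_trans hs1 (le_abs_self _))
    simpa [Real.norm_eq_abs, abs_mul, abs_abs] using this
  have hψ_eq : ∀ r, c ≤ r → ∫ s in Ioi r, D s = -ψ r := by
    intro r hr
    have h0r : (0:ℝ) < r := lt_of_lt_of_le hc0 hr
    have h := integral_Ioi_of_hasDerivAt_of_tendsto (f := ψ) (f' := D) (a := r) (m := 0)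
      hcont.continuousWithinAt
      (fun s hs => by rw [hDeq s (lt_trans h0r hs)]; exact hderiv s (lt_trans h0r hs))
      (hD_int r hr) hlim
    simpa using h
  have hψ_bd : ∀ r, c ≤ r → |ψ r| ≤ ∫ s in Ioi r, |D s| := by
    intro r hr
    calc |ψ r| = |∫ s in Ioi r, D s| := by rw [hψ_eq r hr, abs_neg]
      _ ≤ ∫ s in Ioi r, |D s| := by
          simpa [Real.norm_eq_abs] using
            norm_integral_le_integral_norm (μ := volume.restrict (Ioi r)) D
  -- the kernel for Tonelli
  set K : ℝ × ℝ → ℝ≥0∞ :=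
    ({p : ℝ × ℝ | p.1 < p.2}).indicator
      (fun p => (‖D p.2‖₊ : ℝ≥0∞) * ENNReal.ofReal (p.1)⁻¹) with hKdef
  have hKmeas : Measurable K := by
    refine Measurable.indicator ?_ (measurableSet_lt measurable_fst measurable_snd)
    exact ((hDmeas.comp measurable_snd).nnnorm.coe_nnreal_ennreal).mul
      (measurable_fst.inv.ennreal_ofReal)
  have hIoi_c : IntegrableOn (fun r => ψ r / r) (Ioi c) := by
    refine ⟨(hcont.measurable.div measurable_id).aestronglyMeasurable, ?_⟩
    show ∫⁻ r in Ioi c, (‖ψ r / r‖₊ : ℝ≥0∞) < ⊤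
    have step1 : ∫⁻ r in Ioi c, (‖ψ r / r‖₊ : ℝ≥0∞)
        ≤ ∫⁻ r in Ioi c, (∫⁻ s in Ioi r, (‖D s‖₊ : ℝ≥0∞)) * ENNReal.ofReal r⁻¹ := by
      refine lintegral_mono_ae ((ae_restrict_iff' measurableSet_Ioi).mpr
        (ae_of_all _ fun r hr => ?_))
      have hr0 : (0:ℝ) < r := lt_trans hc0 hr
      have h1 : (‖ψ r / r‖₊ : ℝ≥0∞) = ENNReal.ofReal (|ψ r| * r⁻¹) := by
        rw [← enorm_eq_nnnorm, Real.enorm_eq_ofReal_abs, abs_div, abs_of_pos hr0, div_eq_mul_inv]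
      rw [h1]
      calc ENNReal.ofReal (|ψ r| * r⁻¹)
          ≤ ENNReal.ofReal ((∫ s in Ioi r, |D s|) * r⁻¹) := by
            exact ENNReal.ofReal_le_ofReal
              (mul_le_mul_of_nonneg_right (hψ_bd r (le_of_lt hr)) (inv_nonneg.mpr hr0.le))
        _ = ENNReal.ofReal (∫ s in Ioi r, |D s|) * ENNReal.ofReal r⁻¹ := by
            exact ENNReal.ofReal_mul (integral_nonneg fun s => abs_nonneg _)
        _ = (∫⁻ s in Ioi r, (‖D s‖₊ : ℝ≥0∞)) * ENNReal.ofReal r⁻¹ := by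
            congr 1
            have := ofReal_integral_norm_eq_lintegral_enorm
              (μ := volume.restrict (Ioi r)) ((hD_int r (le_of_lt hr)))
            simp only [Real.norm_eq_abs, enorm_eq_nnnorm] at this; exact this
    have step2 : ∫⁻ r in Ioi c, (∫⁻ s in Ioi r, (‖D s‖₊ : ℝ≥0∞)) * ENNReal.ofReal r⁻¹
        = ∫⁻ r in Ioi c, ∫⁻ s, K (r, s) := by
      refine lintegral_congr fun r => ?_
      have : ∀ s : ℝ, K (r, s) = (Ioi r).indicator
          (fun s => (‖D s‖₊ : ℝ≥0∞) * ENNReal.ofReal r⁻¹) s := by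
        intro s
        by_cases h : r < s <;> simp [hKdef, Set.indicator_apply, h, Set.mem_Ioi]
      rw [lintegral_congr this, lintegral_indicator measurableSet_Ioi,
        lintegral_mul_const' _ _ (by simp : ENNReal.ofReal r⁻¹ ≠ ⊤)]
    have step3 : ∫⁻ r in Ioi c, ∫⁻ s, K (r, s)
        = ∫⁻ s, ∫⁻ r in Ioi c, K (r, s) := by
      exact lintegral_lintegral_swap hKmeas.aemeasurable
    have step4 : ∀ s : ℝ, ∫⁻ r in Ioi c, K (r, s)
        = (‖D s‖₊ : ℝ≥0∞) * ∫⁻ r in Ioo c s, ENNReal.ofReal r⁻¹ := by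
      intro s
      have : ∀ r : ℝ, K (r, s) = (Iio s).indicator
          (fun r => (‖D s‖₊ : ℝ≥0∞) * ENNReal.ofReal r⁻¹) r := by
        intro r
        by_cases h : r < s <;> simp [hKdef, Set.indicator_apply, h, Set.mem_Iio]
      rw [lintegral_congr this, lintegral_indicator measurableSet_Iio,
        Measure.restrict_restrict measurableSet_Iio, Set.inter_comm, Set.Ioi_inter_Iio,
        lintegral_const_mul' _ _ (by simp : (‖D s‖₊ : ℝ≥0∞) ≠ ⊤)]
    have step5 : ∀ s : ℝ, (‖D s‖₊ : ℝ≥0∞) * ∫⁻ r in Ioo c s, ENNReal.ofReal r⁻¹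
        ≤ (Ioi c).indicator (fun s => (‖Real.log s * D s‖₊ : ℝ≥0∞)) s := by
      intro s
      by_cases hcs : c < s
      · have hs0 : (0:ℝ) < s := lt_trans hc0 hcs
        have hlog1 : Real.log c = 1 := Real.log_exp 1
        have hIval : ∫⁻ r in Ioo c s, ENNReal.ofReal r⁻¹
            = ENNReal.ofReal (Real.log s - 1) := by
          have hfi : IntegrableOn (fun r : ℝ => r⁻¹) (Ioo c s) := by
            refine (ContinuousOn.integrableOn_Icc ?_).mono_set Ioo_subset_Icc_self
            exact continuousOn_id.inv₀ fun r hr => ne_of_gt (lt_of_lt_of_le hc0 hr.1)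
          have hnn : 0 ≤ᵐ[volume.restrict (Ioo c s)] fun r : ℝ => r⁻¹ :=
            (ae_restrict_iff' measurableSet_Ioo).mpr (ae_of_all _ fun r hr =>
              inv_nonneg.mpr (le_of_lt (lt_trans hc0 hr.1)))
          rw [← ofReal_integral_eq_lintegral_ofReal hfi hnn]
          congr 1
          have h1 : ∫ r in Ioo c s, r⁻¹ = ∫ r in Ioc c s, r⁻¹ :=
            (integral_Ioc_eq_integral_Ioo).symm
          have h2 : ∫ r in Ioc c s, r⁻¹ = ∫ r in c..s, r⁻¹ :=
            (intervalIntegral.integral_of_le hcs.le).symm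
          have h3 : ∫ r in c..s, r⁻¹ = Real.log (s / c) := by
            refine integral_inv ?_
            rw [Set.uIcc_of_le hcs.le]
            intro h0; exact absurd h0.1 (not_le.mpr hc0)
          rw [h1, h2, h3, Real.log_div (ne_of_gt hs0) (ne_of_gt hc0), hlog1]
        rw [hIval, Set.indicator_of_mem (mem_Ioi.mpr hcs)]
        calc (‖D s‖₊ : ℝ≥0∞) * ENNReal.ofReal (Real.log s - 1)
            ≤ (‖D s‖₊ : ℝ≥0∞) * ENNReal.ofReal (Real.log s) :=
              mul_le_mul_right (ENNReal.ofReal_le_ofReal (by linarith)) _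
          _ = (‖Real.log s * D s‖₊ : ℝ≥0∞) := by
              have hls : 0 < Real.log s := Real.log_pos (lt_trans hc1 hcs)
              rw [← enorm_eq_nnnorm, ← enorm_eq_nnnorm, Real.enorm_eq_ofReal_abs, Real.enorm_eq_ofReal_abs,
                ← ENNReal.ofReal_mul (abs_nonneg _), abs_mul, abs_of_pos hls, mul_comm]
      · have : Ioo c s = ∅ := Ioo_eq_empty hcs
        simp [this]
    have step6 : ∫⁻ s, (Ioi c).indicator (fun s => (‖Real.log s * D s‖₊ : ℝ≥0∞)) s < ⊤ := by
      rw [lintegral_indicator measurableSet_Ioi]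
      exact (hlogD_int.mono_set
        (Ioi_subset_Ioi hc0.le)).2
    calc ∫⁻ r in Ioi c, (‖ψ r / r‖₊ : ℝ≥0∞)
        ≤ ∫⁻ r in Ioi c, (∫⁻ s in Ioi r, (‖D s‖₊ : ℝ≥0∞)) * ENNReal.ofReal r⁻¹ := step1
      _ = ∫⁻ s, ∫⁻ r in Ioi c, K (r, s) := by rw [step2, step3]
      _ ≤ ∫⁻ s, (Ioi c).indicator (fun s => (‖Real.log s * D s‖₊ : ℝ≥0∞)) s := by
          refine lintegral_mono fun s => ?_
          rw [step4 s]; exact step5 s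
      _ < ⊤ := step6
  -- extend to `Ioi ε`
  have hmid : IntegrableOn (fun r => ψ r / r) (Ioc ε c) := by
    refine (ContinuousOn.integrableOn_Icc ?_).mono_set Ioc_subset_Icc_self
    exact hcont.continuousOn.div continuousOn_id
      fun r hr => ne_of_gt (lt_of_lt_of_le hε hr.1)
  refine (hmid.union hIoi_c).mono_set fun r hr => ?_
  rcases le_or_gt r c with h | h
  · exact Or.inl ⟨hr, h⟩
  · exact Or.inr h

/-- Integration by parts on `(ε, ∞)`. -/
lemma aux_ibp (hcont : Continuous ψ)
    (hderiv : ∀ r : ℝ, 0 < r → HasDerivAt ψ (ψ' r) r)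
    (hint : IntegrableOn (fun r => |Real.log r * ψ' r|) (Ioi 0))
    (hlim : Tendsto ψ atTop (nhds 0))
    (hL : IntegrableOn (fun r => Real.log r * ψ' r) (Ioi 0))
    (hliminf : Tendsto (fun r => ψ r * Real.log r) atTop (nhds 0))
    {ε : ℝ} (hε : 0 < ε) :
    ∫ r in Ioi ε, ψ r / r
      = -(ψ ε * Real.log ε) - ∫ r in Ioi ε, Real.log r * ψ' r := by
  have hdiv : IntegrableOn (fun r => ψ r / r) (Ioi ε) :=
    aux_integrableOn_div hcont hderiv hint hlim hε
  have hLε : IntegrableOn (fun r => Real.log r * ψ' r) (Ioi ε) :=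
    hL.mono_set (Ioi_subset_Ioi hε.le)
  have hg : ∀ r ∈ Ioi ε, HasDerivAt (fun r => ψ r * Real.log r)
      (Real.log r * ψ' r + ψ r / r) r := by
    intro r hr
    have hr0 : (0:ℝ) < r := lt_trans hε hr
    have h := (hderiv r hr0).mul (Real.hasDerivAt_log (ne_of_gt hr0))
    exact h.congr_deriv (by rw [div_eq_mul_inv]; ring)
  have hgint : IntegrableOn (fun r => Real.log r * ψ' r + ψ r / r) (Ioi ε) :=
    hLε.add hdiv
  have hcε : ContinuousWithinAt (fun r => ψ r * Real.log r) (Ici ε) ε :=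
    ((hcont.continuousAt).mul (Real.continuousAt_log (ne_of_gt hε))).continuousWithinAt
  have h := integral_Ioi_of_hasDerivAt_of_tendsto (a := ε) (m := 0) hcε hg hgint hliminf
  rw [integral_add hLε hdiv] at h
  have : ∫ r in Ioi ε, ψ r / r
      = (0 - ψ ε * Real.log ε) - ∫ r in Ioi ε, Real.log r * ψ' r := by linarith
  rw [this]; ring

/-- Change of variables `r = a / t`. -/
lemma aux_subst (hcont : Continuous ψ) {a T : ℝ} (ha : 0 < a) (hT : 0 < T) :
    ∫ t in Ioc (0:ℝ) T, ψ (a / t) / t = ∫ r in Ioi (a / T), ψ r / r := by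
  have haT : 0 < a / T := div_pos ha hT
  have himg : (fun r : ℝ => a / r) '' Ioi (a / T) = Ioo 0 T := by
    ext t
    constructor
    · rintro ⟨r, hr, rfl⟩
      have hr0 : 0 < r := lt_trans haT hr
      constructor
      · exact div_pos ha hr0
      · calc a / r < a / (a / T) := div_lt_div_of_pos_left ha haT hr
          _ = T := by field_simp
    · rintro ⟨ht0, htT⟩
      refine ⟨a / t, ?_, by field_simp⟩
      exact div_lt_div_of_pos_left ha ht0 htT
  have hderiv' : ∀ r ∈ Ioi (a / T),
      HasDerivWithinAt (fun r : ℝ => a / r) (-(a / r ^ 2)) (Ioi (a / T)) r := by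
    intro r hr
    have hr0 : (0:ℝ) < r := lt_trans haT hr
    have h := ((hasDerivAt_inv (ne_of_gt hr0)).const_mul a).hasDerivWithinAt
      (s := Ioi (a / T))
    have heq : (fun y : ℝ => a * y⁻¹) = fun y : ℝ => a / y := by
      funext y; rw [div_eq_mul_inv]
    rw [heq] at h
    exact h.congr_deriv (by ring)
  have hinj : InjOn (fun r : ℝ => a / r) (Ioi (a / T)) := by
    have : StrictAntiOn (fun r : ℝ => a / r) (Ioi (a / T)) := fun r1 h1 r2 _ h12 =>
      div_lt_div_of_pos_left ha (lt_trans haT h1) h12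
    exact this.injOn
  have cov := integral_image_eq_integral_abs_deriv_smul measurableSet_Ioi hderiv' hinj
    (fun t => ψ (a / t) / t)
  rw [himg] at cov
  rw [integral_Ioc_eq_integral_Ioo, cov]
  refine setIntegral_congr_fun measurableSet_Ioi fun r hr => ?_
  have hr0 : (0:ℝ) < r := lt_trans haT hr
  have h1 : a / (a / r) = r := by field_simp
  rw [h1, smul_eq_mul, abs_neg, abs_of_pos (by positivity)]
  field_simp

end Aux

/-- renormalized wavelet-type representation of the logarithmic Riesz
potential `g(x) = -log|x|` (case `s = 0`). Here `ψ` is the radial profile of `φ`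
and `ψ'` its derivative; `C_{φ,T} = ψ(0) log T - ∫₀^∞ log(r) ψ'(r) dr`. -/
theorem log_riesz_wavelet_representation (d : ℕ) (hd : 1 ≤ d)
    (ψ ψ' : ℝ → ℝ) (hcont : Continuous ψ) (hbdd : ∃ M, ∀ r, |ψ r| ≤ M)
    (hlim : Tendsto ψ atTop (nhds 0))
    (hderiv : ∀ r : ℝ, 0 < r → HasDerivAt ψ (ψ' r) r)
    (hint : IntegrableOn (fun r => |Real.log r * ψ' r|) (Ioi 0))
    (hlim0 : Tendsto (fun r => (ψ r - ψ 0) * Real.log r) (nhdsWithin 0 (Ioi 0)) (nhds 0))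
    (hliminf : Tendsto (fun r => ψ r * Real.log r) atTop (nhds 0))
    (x : EuclideanSpace ℝ (Fin d)) (hx : x ≠ 0) :
    Tendsto (fun T : ℝ =>
        (∫ t in Ioc (0:ℝ) T, ψ (‖x‖ / t) / t)
          - (ψ 0 * Real.log T - ∫ r in Ioi (0:ℝ), Real.log r * ψ' r))
      atTop (nhds (-(ψ 0) * Real.log ‖x‖)) := by
  set a := ‖x‖ with hadef
  have ha : 0 < a := norm_pos_iff.mpr hx
  have hDeq : ∀ s : ℝ, 0 < s → deriv ψ s = ψ' s := fun s hs => (hderiv s hs).deriv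
  have habsD : IntegrableOn (fun s => |Real.log s * deriv ψ s|) (Ioi 0) :=
    hint.congr_fun (fun s hs => by rw [hDeq s hs]) measurableSet_Ioi
  have hLD_int : IntegrableOn (fun s => Real.log s * deriv ψ s) (Ioi 0) := by
    refine (integrable_norm_iff
      ((Real.measurable_log.mul (measurable_deriv ψ)).aestronglyMeasurable)).mp ?_
    simpa only [Real.norm_eq_abs, IntegrableOn, Pi.mul_apply] using habsD
  have hL_int : IntegrableOn (fun s => Real.log s * ψ' s) (Ioi 0) :=
    hLD_int.congr_fun (fun s hs => by beta_reduce; rw [hDeq s hs]) measurableSet_Ioi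
  have key : ∀ᶠ T in atTop, (∫ t in Ioc (0:ℝ) T, ψ (a / t) / t)
      - (ψ 0 * Real.log T - ∫ r in Ioi (0:ℝ), Real.log r * ψ' r)
      = -(ψ 0) * Real.log a - (ψ (a / T) - ψ 0) * Real.log (a / T)
        + ∫ r in Ioc (0:ℝ) (a / T), Real.log r * ψ' r := by
    filter_upwards [eventually_gt_atTop 0] with T hT
    have hε : 0 < a / T := div_pos ha hT
    have hsub := aux_subst (ψ := ψ) hcont ha hT
    have hibp := aux_ibp hcont hderiv hint hlim hL_int hliminf hε
    have hsplit : ∫ r in Ioi (0:ℝ), Real.log r * ψ' r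
        = (∫ r in Ioc (0:ℝ) (a / T), Real.log r * ψ' r)
          + ∫ r in Ioi (a / T), Real.log r * ψ' r := by
      rw [← setIntegral_union (Set.Ioc_disjoint_Ioi le_rfl) measurableSet_Ioi
        (hL_int.mono_set Ioc_subset_Ioi_self) (hL_int.mono_set (Ioi_subset_Ioi hε.le)),
        Set.Ioc_union_Ioi_eq_Ioi hε.le]
    have hlogdiv : Real.log (a / T) = Real.log a - Real.log T :=
      Real.log_div (ne_of_gt ha) (ne_of_gt hT)
    rw [hsub, hibp, hsplit, hlogdiv]
    ring
  have htd : Tendsto (fun T : ℝ => a / T) atTop (nhds 0) :=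
    Tendsto.div_atTop tendsto_const_nhds tendsto_id
  have htend : Tendsto (fun T : ℝ => a / T) atTop (nhdsWithin 0 (Ioi 0)) := by
    rw [tendsto_nhdsWithin_iff]
    exact ⟨htd, (eventually_gt_atTop 0).mono fun T hT => div_pos ha hT⟩
  have t2 : Tendsto (fun T : ℝ => (ψ (a / T) - ψ 0) * Real.log (a / T)) atTop (nhds 0) :=
    hlim0.comp htend
  have t3 : Tendsto (fun T : ℝ => ∫ r in Ioc (0:ℝ) (a / T), Real.log r * ψ' r)
      atTop (nhds 0) := by
    have hIcc : IntegrableOn (fun r => Real.log r * ψ' r) (Icc (0:ℝ) 1) := by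
      rw [integrableOn_Icc_iff_integrableOn_Ioc]
      exact hL_int.mono_set Ioc_subset_Ioi_self
    have hcont0 := (intervalIntegral.continuousOn_primitive hIcc) 0
      (by norm_num : (0:ℝ) ∈ Icc (0:ℝ) 1)
    have h0 : (∫ t in Ioc (0:ℝ) (0:ℝ), Real.log t * ψ' t) = 0 := by simp
    have hw : Tendsto (fun u : ℝ => ∫ t in Ioc (0:ℝ) u, Real.log t * ψ' t)
        (nhdsWithin 0 (Icc (0:ℝ) 1)) (nhds 0) := by
      simpa only [Set.Ioc_self, Measure.restrict_empty, integral_zero_measure]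
        using hcont0.tendsto
    have hmap : Tendsto (fun T : ℝ => a / T) atTop (nhdsWithin 0 (Icc (0:ℝ) 1)) := by
      rw [tendsto_nhdsWithin_iff]
      refine ⟨htd, ?_⟩
      filter_upwards [eventually_ge_atTop (max a 1)] with T hT
      have hT0 : (0:ℝ) < T := lt_of_lt_of_le zero_lt_one (le_trans (le_max_right a 1) hT)
      constructor
      · exact (div_pos ha hT0).le
      · rw [div_le_one hT0]; exact le_trans (le_max_left a 1) hT
    exact hw.comp hmap
  have final : Tendsto (fun T : ℝ => -(ψ 0) * Real.log a
      - (ψ (a / T) - ψ 0) * Real.log (a / T)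
      + ∫ r in Ioc (0:ℝ) (a / T), Real.log r * ψ' r)
      atTop (nhds (-(ψ 0) * Real.log a - 0 + 0)) :=
    (tendsto_const_nhds.sub t2).add t3
  rw [show -(ψ 0) * Real.log a - 0 + 0 = -(ψ 0) * Real.log a by ring] at final
  exact Tendsto.congr' (key.mono fun T h => h.symm) final
end

section
/- Let 0 ≤ s < d, φ as above with additionally φ(x) ≤ C_γ ⟨x⟩^{-γ} for some γ > s (⟨x⟩ = (1+|x|²)^{1/2}). Define f_η := g − g_η = c_{φ,d,s} ∫₀^η t^{d-s} φ_t(x) dt/t. Then 0 ≤ f_η(x) ≤ C'_γ η^{γ-s}/|x|^γ for all x ≠ 0, where C'_γ depends only on d, s, γ, φ. -/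
open MeasureTheory Filter Set

/-- decay of the small-scale part `f_η = g - g_η` of the truncated Riesz
potential: `f_η(x) = c_{φ,d,s} ∫₀^η t^{d-s} φ_t(x) dt/t` with `φ(x) = ψ(|x|)`,
`φ_t(x) = t^{-d} ψ(|x|/t)`. If `ψ(r) ≤ C_γ (1+r²)^{-γ/2}` for some `γ > s`, then
`0 ≤ f_η(x) ≤ C' η^{γ-s}/|x|^γ` for `x ≠ 0`. -/
theorem small_scale_part_decay (d : ℕ) (hd : 1 ≤ d) (s : ℝ) (hs : 0 ≤ s)
    (hsd : s < d)
    (ψ : ℝ → ℝ) (hψ0 : ∀ r, 0 ≤ ψ r) (hcont : Continuous ψ)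
    (γ Cγ : ℝ) (hγ : s < γ) (hCγ : 0 < Cγ)
    (hdecay : ∀ r : ℝ, 0 ≤ r → ψ r ≤ Cγ * (1 + r ^ 2) ^ (-γ / 2))
    (c : ℝ) (hc : 0 ≤ c) :
    ∃ C' : ℝ, 0 < C' ∧ ∀ η : ℝ, 0 < η → ∀ x : EuclideanSpace ℝ (Fin d), x ≠ 0 →
      0 ≤ c * (∫ t in Ioc (0:ℝ) η, t ^ ((d:ℝ) - s) * (t ^ (-(d:ℝ)) * ψ (‖x‖ / t)) / t) ∧
      c * (∫ t in Ioc (0:ℝ) η, t ^ ((d:ℝ) - s) * (t ^ (-(d:ℝ)) * ψ (‖x‖ / t)) / t)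
        ≤ C' * η ^ (γ - s) / ‖x‖ ^ γ := by
  have hγ0 : 0 < γ := lt_of_le_of_lt hs hγ
  have hγs : 0 < γ - s := sub_pos.mpr hγ
  refine ⟨(c + 1) * Cγ / (γ - s), by positivity, ?_⟩
  intro η hη x hx
  have hxn : 0 < ‖x‖ := norm_pos_iff.mpr hx
  set f : ℝ → ℝ := fun t => t ^ ((d:ℝ) - s) * (t ^ (-(d:ℝ)) * ψ (‖x‖ / t)) / t with hfdef
  set g : ℝ → ℝ := fun t => Cγ * ‖x‖ ^ (-γ) * t ^ (γ - s - 1) with hgdef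
  have hfnn : ∀ t ∈ Ioc (0:ℝ) η, 0 ≤ f t := by
    intro t ht
    have h1 := hψ0 (‖x‖ / t)
    have ht0 := ht.1
    simp only [hfdef]
    positivity
  have key : ∀ t ∈ Ioc (0:ℝ) η, f t ≤ g t := by
    intro t ht
    have ht0 : (0:ℝ) < t := ht.1
    have hr : 0 < ‖x‖ / t := by positivity
    have h1 : ψ (‖x‖ / t) ≤ Cγ * (‖x‖ / t) ^ (-γ) := by
      calc ψ (‖x‖ / t) ≤ Cγ * (1 + (‖x‖ / t) ^ 2) ^ (-γ / 2) := hdecay _ hr.le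
        _ ≤ Cγ * ((‖x‖ / t) ^ 2) ^ (-γ / 2) := by
            have : ((‖x‖ / t) ^ 2 : ℝ) ^ (-γ / 2) ≥ (1 + (‖x‖ / t) ^ 2) ^ (-γ / 2) :=
              Real.rpow_le_rpow_of_nonpos (by positivity) (by nlinarith) (by linarith)
            nlinarith
        _ = Cγ * (‖x‖ / t) ^ (-γ) := by
            rw [← Real.rpow_natCast (‖x‖ / t) 2, ← Real.rpow_mul hr.le,
              show ((2:ℕ):ℝ) * (-γ / 2) = -γ by push_cast; ring]
    have h2 : (‖x‖ / t) ^ (-γ) = ‖x‖ ^ (-γ) * t ^ γ := by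
      rw [Real.div_rpow hxn.le ht0.le, Real.rpow_neg ht0.le]
      field_simp
    calc f t ≤ t ^ ((d:ℝ) - s) * (t ^ (-(d:ℝ)) * (Cγ * (‖x‖ / t) ^ (-γ))) / t := by
          simp only [hfdef]
          gcongr
        _ = g t := by
          rw [h2]
          simp only [hgdef]
          have hexp : t ^ (γ - s - 1) = t ^ ((d:ℝ) - s) * t ^ (-(d:ℝ)) * t ^ γ * t⁻¹ := by
            rw [show (γ - s - 1 : ℝ) = ((d:ℝ) - s) + (-(d:ℝ)) + γ + (-1) by ring,
              Real.rpow_add ht0, Real.rpow_add ht0, Real.rpow_add ht0, Real.rpow_neg_one]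
          rw [hexp]
          field_simp
  have hg_int : IntegrableOn g (Ioc 0 η) volume := by
    have := (intervalIntegral.intervalIntegrable_rpow' (a := 0) (b := η)
      (r := γ - s - 1) (by linarith)).const_mul (Cγ * ‖x‖ ^ (-γ))
    exact this.1
  have hf_meas : AEStronglyMeasurable f (volume.restrict (Ioc 0 η)) := by
    have hco : ContinuousOn f (Ioc 0 η) := by
      intro t ht
      have ht0 : t ≠ 0 := ne_of_gt ht.1
      apply ContinuousAt.continuousWithinAt
      exact ((Real.continuousAt_rpow_const t _ (Or.inl ht0)).mul
        ((Real.continuousAt_rpow_const t _ (Or.inl ht0)).mul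
          (hcont.continuousAt.comp (continuousAt_const.div continuousAt_id ht0)))).div
        continuousAt_id ht0
    exact hco.aestronglyMeasurable measurableSet_Ioc
  have hf_int : IntegrableOn f (Ioc 0 η) volume := by
    refine hg_int.mono' hf_meas ?_
    filter_upwards [ae_restrict_mem measurableSet_Ioc] with t ht
    rw [Real.norm_eq_abs, abs_of_nonneg (hfnn t ht)]
    exact key t ht
  have hint_nonneg : 0 ≤ ∫ t in Ioc (0:ℝ) η, f t :=
    setIntegral_nonneg measurableSet_Ioc hfnn
  have hgval : ∫ t in Ioc (0:ℝ) η, g t = Cγ * ‖x‖ ^ (-γ) * (η ^ (γ - s) / (γ - s)) := by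
    rw [hgdef]
    simp only
    rw [MeasureTheory.integral_const_mul, ← intervalIntegral.integral_of_le hη.le,
      integral_rpow (Or.inl (by linarith))]
    rw [show (γ - s - 1 + 1 : ℝ) = γ - s by ring, Real.zero_rpow (ne_of_gt hγs)]
    ring
  refine ⟨mul_nonneg hc hint_nonneg, ?_⟩
  have hmono : ∫ t in Ioc (0:ℝ) η, f t ≤ ∫ t in Ioc (0:ℝ) η, g t :=
    setIntegral_mono_on hf_int hg_int measurableSet_Ioc key
  calc c * ∫ t in Ioc (0:ℝ) η, f t ≤ c * ∫ t in Ioc (0:ℝ) η, g t :=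
        mul_le_mul_of_nonneg_left hmono hc
    _ = c * Cγ / (γ - s) * η ^ (γ - s) / ‖x‖ ^ γ := by
        rw [hgval, Real.rpow_neg hxn.le]
        field_simp
    _ ≤ (c + 1) * Cγ / (γ - s) * η ^ (γ - s) / ‖x‖ ^ γ := by
        gcongr
        linarith
end

section
/- Let 0 ≤ s < d and φ as in the truncation scheme, with additionally φ ∈ C¹(ℝ^d∖{0}) and |x||∇φ(x)| ≤ C φ(c x) for some constants C > 0, c ∈ (0,1). Then for every η > 0 and x ≠ 0, |x| |∇f_η(x)| ≤ C c^{-s} f_{η/c}(x) (up to a multiplicative constant depending only on d, s, φ), where f_η = g − g_η. -/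
open MeasureTheory Filter Set Topology
open scoped ENNReal NNReal

private lemma measurable_of_contOn_compl_singleton {α : Type*} [TopologicalSpace α]
    [MeasurableSpace α] [BorelSpace α] [T1Space α] (a : α) {f : α → ℝ}
    (hf : ContinuousOn f {a}ᶜ) : Measurable f := by
  apply measurable_of_isOpen
  intro U hU
  have h1 : IsOpen ({a}ᶜ ∩ f ⁻¹' U) := hf.isOpen_inter_preimage isOpen_compl_singleton hU
  by_cases ha : f a ∈ U
  · have h2 : f ⁻¹' U = ({a}ᶜ ∩ f ⁻¹' U) ∪ {a} := by
      ext z; by_cases hz : z = a <;> simp [hz, ha]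
    rw [h2]
    exact h1.measurableSet.union (measurableSet_singleton a)
  · have h2 : f ⁻¹' U = ({a}ᶜ ∩ f ⁻¹' U) := by
      ext z; by_cases hz : z = a <;> simp [hz, ha]
    rw [h2]
    exact h1.measurableSet

private lemma lintegral_Ioc_scale {b : ℝ} (hb : 0 < b) (a : ℝ) {g : ℝ → ℝ≥0∞}
    (hg : Measurable g) :
    ∫⁻ t in Ioc 0 a, g (b * t) = ENNReal.ofReal b⁻¹ * ∫⁻ u in Ioc 0 (b * a), g u := by
  have hpre : (fun t : ℝ => b * t) ⁻¹' (Ioc 0 (b * a)) = Ioc 0 a := by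
    ext t
    simp only [mem_preimage, mem_Ioc]
    constructor
    · rintro ⟨h1, h2⟩
      refine ⟨?_, le_of_mul_le_mul_left h2 hb⟩
      rcases mul_pos_iff.1 h1 with h | h
      · exact h.2
      · linarith [h.1]
    · rintro ⟨h1, h2⟩
      exact ⟨mul_pos hb h1, mul_le_mul_of_nonneg_left h2 hb.le⟩
  have hmap : (volume.restrict (Ioc 0 a)).map (fun t : ℝ => b * t)
      = ENNReal.ofReal b⁻¹ • volume.restrict (Ioc 0 (b * a)) := by
    rw [← hpre, ← Measure.restrict_map (measurable_const_mul b) measurableSet_Ioc,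
      Real.map_volume_mul_left hb.ne', abs_of_pos (inv_pos.2 hb), Measure.restrict_smul]
  calc ∫⁻ t in Ioc 0 a, g (b * t)
      = ∫⁻ u, g u ∂((volume.restrict (Ioc 0 a)).map (fun t : ℝ => b * t)) :=
        (lintegral_map hg (measurable_const_mul b)).symm
    _ = ENNReal.ofReal b⁻¹ * ∫⁻ u in Ioc 0 (b * a), g u := by
        rw [hmap, lintegral_smul_measure, smul_eq_mul]

set_option maxHeartbeats 4000000 in
/-- gradient bound for the small-scale part `f_η = g - g_η`:
if `φ ∈ C¹(ℝ^d∖{0})` with `|x||∇φ(x)| ≤ C φ(c x)` for some `C > 0`, `c ∈ (0,1)`,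
then `|x||∇f_η(x)| ≤ C₀ C c^{-s} f_{η/c}(x)` (with `C₀` depending only on `d, s, φ`),
where `f_η(x) = c_{φ,d,s} ∫₀^η t^{d-s} φ_t(x) dt/t`, `φ_t(x) = t^{-d} φ(x/t)`. -/
theorem small_scale_part_gradient_bound (d : ℕ) (hd : 1 ≤ d) (s : ℝ) (hs : 0 ≤ s)
    (hsd : s < d)
    (φ : EuclideanSpace ℝ (Fin d) → ℝ) (hφ0 : ∀ x, 0 ≤ φ x)
    (hφC1 : ContDiffOn ℝ 1 φ {(0 : EuclideanSpace ℝ (Fin d))}ᶜ)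
    (C c : ℝ) (hC : 0 < C) (hc : c ∈ Ioo (0:ℝ) 1)
    (hgrad : ∀ x : EuclideanSpace ℝ (Fin d), x ≠ 0 →
      ‖x‖ * ‖fderiv ℝ φ x‖ ≤ C * φ (c • x))
    (cφ : ℝ) (hcφ : 0 ≤ cφ) :
    ∃ C₀ : ℝ, 0 < C₀ ∧ ∀ η : ℝ, 0 < η → ∀ x : EuclideanSpace ℝ (Fin d), x ≠ 0 →
      ‖x‖ * ‖fderiv ℝ
          (fun y => cφ * ∫ t in Ioc (0:ℝ) η,
            t ^ ((d:ℝ) - s) * (t ^ (-(d:ℝ)) * φ (t⁻¹ • y)) / t) x‖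
        ≤ C₀ * C * c ^ (-s) *
          (cφ * ∫ t in Ioc (0:ℝ) (η / c),
            t ^ ((d:ℝ) - s) * (t ^ (-(d:ℝ)) * φ (t⁻¹ • x)) / t) := by
  obtain ⟨hc0, hc1⟩ := hc
  refine ⟨2, two_pos, ?_⟩
  intro η hη x hx
  let ψ : EuclideanSpace ℝ (Fin d) → ℝ → ℝ :=
    fun y t => t ^ ((d:ℝ) - s) * (t ^ (-(d:ℝ)) * φ (t⁻¹ • y)) / t
  let φs : EuclideanSpace ℝ (Fin d) → ℝ → ℝ := fun y t => t ^ (-s - 1) * φ (t⁻¹ • y)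
  let I : EuclideanSpace ℝ (Fin d) → ℝ := fun y => ∫ t in Ioc (0:ℝ) η, ψ y t
  let F : EuclideanSpace ℝ (Fin d) → ℝ := fun y => cφ * I y
  let R : ℝ := ∫ t in Ioc (0:ℝ) (η / c), ψ x t
  show ‖x‖ * ‖fderiv ℝ F x‖ ≤ 2 * C * c ^ (-s) * (cφ * R)
  have hψ_eq : ∀ (y : EuclideanSpace ℝ (Fin d)) (t : ℝ), 0 < t → ψ y t = φs y t := by
    intro y t ht
    show t ^ ((d:ℝ) - s) * (t ^ (-(d:ℝ)) * φ (t⁻¹ • y)) / t = t ^ (-s - 1) * φ (t⁻¹ • y)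
    have h1 : t ^ ((d:ℝ) - s) * t ^ (-(d:ℝ)) = t ^ (-s) := by
      rw [← Real.rpow_add ht]; ring_nf
    have h2 : t ^ (-s - 1 : ℝ) = t ^ (-s : ℝ) / t := Real.rpow_sub_one ht.ne' (-s)
    calc t ^ ((d:ℝ) - s) * (t ^ (-(d:ℝ)) * φ (t⁻¹ • y)) / t
        = (t ^ ((d:ℝ) - s) * t ^ (-(d:ℝ))) * φ (t⁻¹ • y) / t := by ring
      _ = t ^ (-s : ℝ) * φ (t⁻¹ • y) / t := by rw [h1]
      _ = (t ^ (-s : ℝ) / t) * φ (t⁻¹ • y) := by ring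
      _ = t ^ (-s - 1 : ℝ) * φ (t⁻¹ • y) := by rw [h2]
  have hφs_nonneg : ∀ (y : EuclideanSpace ℝ (Fin d)) (t : ℝ), 0 < t → 0 ≤ φs y t :=
    fun y t ht => mul_nonneg (Real.rpow_nonneg ht.le _) (hφ0 _)
  have hψ_nonneg : ∀ (y : EuclideanSpace ℝ (Fin d)) (t : ℝ), 0 < t → 0 ≤ ψ y t := by
    intro y t ht; rw [hψ_eq y t ht]; exact hφs_nonneg y t ht
  have hRnonneg : 0 ≤ R :=
    setIntegral_nonneg measurableSet_Ioc (fun t ht => hψ_nonneg x t ht.1)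
  have hcs_pos : (0:ℝ) < c ^ (-s) := Real.rpow_pos_of_pos hc0 _
  have hRHSnonneg : 0 ≤ 2 * C * c ^ (-s) * (cφ * R) := by
    have := mul_nonneg hcφ hRnonneg
    have h2 : (0:ℝ) ≤ 2 * C * c ^ (-s) := by positivity
    exact mul_nonneg h2 this
  by_cases hdiff : DifferentiableAt ℝ F x
  swap
  · rw [fderiv_zero_of_not_differentiableAt hdiff, norm_zero, mul_zero]
    exact hRHSnonneg
  have hInonneg : ∀ y, 0 ≤ I y :=
    fun y => setIntegral_nonneg measurableSet_Ioc (fun t ht => hψ_nonneg y t ht.1)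
  have hFnonneg : ∀ y, 0 ≤ F y := fun y => mul_nonneg hcφ (hInonneg y)
  by_cases hFx : F x = 0
  · have hmin : IsLocalMin F x := Filter.Eventually.of_forall fun y => by
      rw [hFx]; exact hFnonneg y
    rw [hmin.fderiv_eq_zero, norm_zero, mul_zero]
    exact hRHSnonneg
  -- main case
  have hFxpos : 0 < F x := (hFnonneg x).lt_of_ne (Ne.symm hFx)
  have hcφpos : 0 < cφ := by
    rcases hcφ.lt_or_eq with h | h
    · exact h
    · exfalso; apply hFx; rw [show F x = cφ * I x from rfl, ← h, zero_mul]
  have hxn : (0:ℝ) < ‖x‖ := norm_pos_iff.2 hx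
  have hηc : η < η / c := by
    rw [lt_div_iff₀ hc0]; nlinarith
  have hηcpos : 0 < η / c := div_pos hη hc0
  have hφcont : ContinuousOn φ {(0 : EuclideanSpace ℝ (Fin d))}ᶜ := hφC1.continuousOn
  have hφmeas : Measurable φ := measurable_of_contOn_compl_singleton _ hφcont
  have hφcontAt : ∀ z : EuclideanSpace ℝ (Fin d), z ≠ 0 → ContinuousAt φ z := by
    intro z hz
    exact hφcont.continuousAt (isOpen_compl_singleton.mem_nhds hz)
  have hφdiffAt : ∀ z : EuclideanSpace ℝ (Fin d), z ≠ 0 → DifferentiableAt ℝ φ z := by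
    intro z hz
    exact (hφC1.differentiableOn one_ne_zero).differentiableAt (isOpen_compl_singleton.mem_nhds hz)
  have hfdcont : ContinuousOn (fderiv ℝ φ) {(0 : EuclideanSpace ℝ (Fin d))}ᶜ :=
    hφC1.continuousOn_fderiv_of_isOpen isOpen_compl_singleton le_rfl
  have hrpm : Measurable (fun u : ℝ => u ^ (-s - 1)) := by
    apply measurable_of_contOn_compl_singleton (0:ℝ)
    intro u hu
    exact (Real.continuousAt_rpow_const u _ (Or.inl hu)).continuousWithinAt
  have hφsmeas : ∀ y : EuclideanSpace ℝ (Fin d), Measurable (fun t => φs y t) :=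
    fun y => hrpm.mul (hφmeas.comp (measurable_inv.smul_const y))
  -- continuity of the truncated tail Er
  let Er : EuclideanSpace ℝ (Fin d) → ℝ := fun y => ∫ t in Ioc η (η / c), φs y t
  have hnormlb : ∀ y : EuclideanSpace ℝ (Fin d), y ∈ Metric.closedBall x (‖x‖/2) →
      ‖x‖/2 ≤ ‖y‖ ∧ y ≠ 0 := by
    intro y hy
    rw [Metric.mem_closedBall, dist_eq_norm] at hy
    have h1 : ‖x‖ - ‖y‖ ≤ ‖y - x‖ := by
      have := norm_sub_norm_le x y
      rwa [norm_sub_rev y x]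
    have h2 : ‖x‖/2 ≤ ‖y‖ := by linarith
    refine ⟨h2, ?_⟩
    intro h0
    rw [h0, norm_zero] at h2
    linarith
  obtain ⟨M, hM⟩ : ∃ M, ∀ y ∈ Metric.closedBall x (‖x‖/2), ∀ t ∈ Icc η (η/c),
      ‖φs y t‖ ≤ M := by
    have hcomp : IsCompact ((Metric.closedBall x (‖x‖/2)) ×ˢ (Icc η (η/c))) :=
      (isCompact_closedBall x (‖x‖/2)).prod isCompact_Icc
    have hconton : ContinuousOn (fun p : (EuclideanSpace ℝ (Fin d)) × ℝ => φs p.1 p.2)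
        ((Metric.closedBall x (‖x‖/2)) ×ˢ (Icc η (η/c))) := by
      intro p hp
      obtain ⟨hp1, hp2⟩ := hp
      have ht0 : (0:ℝ) < p.2 := lt_of_lt_of_le hη hp2.1
      have hy0 : p.1 ≠ 0 := (hnormlb p.1 hp1).2
      have hz : p.2⁻¹ • p.1 ≠ 0 := smul_ne_zero (inv_ne_zero ht0.ne') hy0
      apply ContinuousAt.continuousWithinAt
      apply ContinuousAt.mul
      · exact (Real.continuousAt_rpow_const _ _ (Or.inl ht0.ne')).comp continuousAt_snd
      · exact ContinuousAt.comp (g := φ) (f := fun p : (EuclideanSpace ℝ (Fin d)) × ℝ => p.2⁻¹ • p.1)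
          (x := p) (hφcontAt _ hz) ((continuousAt_snd.inv₀ ht0.ne').smul continuousAt_fst)
    obtain ⟨M, hM⟩ := hcomp.exists_bound_of_continuousOn hconton
    exact ⟨M, fun y hy t ht => hM (y, t) (mk_mem_prod hy ht)⟩
  have hvolfin : volume (Ioc η (η/c)) < ⊤ := by
    rw [Real.volume_Ioc]; exact ENNReal.ofReal_lt_top
  have hErint : ∀ y ∈ Metric.closedBall x (‖x‖/2),
      IntegrableOn (fun t => φs y t) (Ioc η (η/c)) volume := by
    intro y hy
    apply Integrable.mono' (integrableOn_const (C := M) hvolfin.ne)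
      ((hφsmeas y).aestronglyMeasurable)
    exact (ae_restrict_iff' measurableSet_Ioc).2 (Eventually.of_forall fun t ht =>
      hM y hy t (Ioc_subset_Icc_self ht))
  have hErcont : ContinuousAt Er x := by
    apply continuousAt_of_dominated (bound := fun _ => M)
    · exact Eventually.of_forall fun y => ((hφsmeas y).aestronglyMeasurable)
    · apply Filter.eventually_of_mem (Metric.closedBall_mem_nhds x (half_pos hxn))
      intro y hy
      exact (ae_restrict_iff' measurableSet_Ioc).2 (Eventually.of_forall fun t ht =>
        hM y hy t (Ioc_subset_Icc_self ht))
    · exact integrableOn_const (C := M) hvolfin.ne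
    · apply (ae_restrict_iff' measurableSet_Ioc).2
      apply Eventually.of_forall
      intro t ht
      have ht0 : (0:ℝ) < t := lt_trans hη ht.1
      have hz : t⁻¹ • x ≠ 0 := smul_ne_zero (inv_ne_zero ht0.ne') hx
      apply ContinuousAt.mul continuousAt_const
      exact (hφcontAt _ hz).comp ((continuousAt_id (x := x)).const_smul t⁻¹)
  have hIcont : ContinuousAt I x := by
    have h := hdiff.continuousAt.div_const cφ
    have heq : (fun y => F y / cφ) = I := by
      funext y
      show (cφ * I y) / cφ = I y
      field_simp
    rwa [heq] at h
  have hevInt : ∀ᶠ y in 𝓝 x, IntegrableOn (fun t => ψ y t) (Ioc 0 η) volume := by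
    have hevFpos : ∀ᶠ y in 𝓝 x, 0 < F y := by
      have h := hdiff.continuousAt.preimage_mem_nhds (Ioi_mem_nhds hFxpos)
      exact Filter.eventually_of_mem h (fun y hy => hy)
    apply hevFpos.mono
    intro y hy
    by_contra h
    have h0 : I y = 0 := integral_undef h
    rw [show F y = cφ * I y from rfl, h0, mul_zero] at hy
    exact lt_irrefl 0 hy
  have hxint : IntegrableOn (fun t => ψ x t) (Ioc 0 η) volume := hevInt.self_of_nhds
  have hxcb : x ∈ Metric.closedBall x (‖x‖/2) := Metric.mem_closedBall_self (half_pos hxn).le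
  -- conversion between ψ-integrals and φs-integrals
  have hIcongr : ∀ y : EuclideanSpace ℝ (Fin d),
      IntegrableOn (fun t => ψ y t) (Ioc 0 η) volume →
      IntegrableOn (fun t => φs y t) (Ioc 0 η) volume := by
    intro y hyint
    exact hyint.congr ((ae_restrict_iff' measurableSet_Ioc).2
      (Eventually.of_forall fun t ht => hψ_eq y t ht.1))
  have hIval : ∀ y : EuclideanSpace ℝ (Fin d), (∫ t in Ioc (0:ℝ) η, φs y t) = I y :=
    fun y => setIntegral_congr_fun measurableSet_Ioc (fun t ht => (hψ_eq y t ht.1).symm)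
  have hdisj : Disjoint (Ioc (0:ℝ) η) (Ioc η (η/c)) := Ioc_disjoint_Ioc_of_le le_rfl
  have hsplit : ∀ y : EuclideanSpace ℝ (Fin d), y ∈ Metric.closedBall x (‖x‖/2) →
      IntegrableOn (fun t => ψ y t) (Ioc 0 η) volume →
      (∫⁻ t in Ioc (0:ℝ) (η/c), ENNReal.ofReal (φs y t)) = ENNReal.ofReal (I y + Er y) := by
    intro y hycb hyint
    have h1 := hIcongr y hyint
    have h2 := hErint y hycb
    rw [← Ioc_union_Ioc_eq_Ioc hη.le hηc.le, lintegral_union measurableSet_Ioc hdisj]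
    rw [← ofReal_integral_eq_lintegral_ofReal h1 ((ae_restrict_iff' measurableSet_Ioc).2
      (Eventually.of_forall fun t ht => hφs_nonneg y t ht.1))]
    rw [← ofReal_integral_eq_lintegral_ofReal h2 ((ae_restrict_iff' measurableSet_Ioc).2
      (Eventually.of_forall fun t ht => hφs_nonneg y t (lt_trans hη ht.1)))]
    rw [← ENNReal.ofReal_add (by rw [hIval y]; exact hInonneg y)
      (setIntegral_nonneg measurableSet_Ioc (fun t ht => hφs_nonneg y t (lt_trans hη ht.1)))]
    rw [hIval y]
  have hR_split : R = I x + Er x := by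
    have h1 := hIcongr x hxint
    have h2 := hErint x hxcb
    have hRφs : R = ∫ t in Ioc (0:ℝ) (η/c), φs x t :=
      setIntegral_congr_fun measurableSet_Ioc (fun t ht => hψ_eq x t ht.1)
    rw [hRφs, ← Ioc_union_Ioc_eq_Ioc hη.le hηc.le,
      setIntegral_union hdisj measurableSet_Ioc h1 h2, hIval x]
  -- the key operator-norm estimate
  have key_est : ∀ v : EuclideanSpace ℝ (Fin d), v ≠ 0 → ∀ ε : ℝ, 0 < ε →
      ‖(fderiv ℝ F x) v‖ ≤ 2 * C * cφ * c ^ (-s) * (R + ε) * ‖v‖ / ‖x‖ := by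
    intro v hv ε hε
    have hvn : (0:ℝ) < ‖v‖ := norm_pos_iff.2 hv
    -- eventual bound on the lintegral J
    have hevJl : ∀ᶠ y in 𝓝 x,
        (∫⁻ t in Ioc (0:ℝ) (η/c), ENNReal.ofReal (φs y t)) ≤ ENNReal.ofReal (R + ε) := by
      have hcont2 : ContinuousAt (fun y => I y + Er y) x := hIcont.add hErcont
      have hev3 : ∀ᶠ y in 𝓝 x, I y + Er y < R + ε := by
        have hlt : I x + Er x < R + ε := by rw [← hR_split]; linarith
        exact hcont2.eventually_lt_const hlt
      have hevcb : ∀ᶠ y in 𝓝 x, y ∈ Metric.closedBall x (‖x‖/2) :=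
        Filter.eventually_of_mem (Metric.closedBall_mem_nhds x (half_pos hxn)) (fun y hy => hy)
      filter_upwards [hev3, hevcb, hevInt] with y h3 hcb hint
      rw [hsplit y hcb hint]
      exact ENNReal.ofReal_le_ofReal h3.le
    have hevcb : ∀ᶠ y in 𝓝 x, y ∈ Metric.closedBall x (‖x‖/2) :=
      Filter.eventually_of_mem (Metric.closedBall_mem_nhds x (half_pos hxn)) (fun y hy => hy)
    obtain ⟨ρ0, hρ0pos, hρ0⟩ := Metric.eventually_nhds_iff.1
      ((hevInt.and hevJl).and hevcb)
    set δ : ℝ := ρ0 / (2 * ‖v‖) with hδdef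
    have hδpos : 0 < δ := div_pos hρ0pos (mul_pos two_pos hvn)
    set W : ℝ := 2 * C * ‖v‖ / ‖x‖ with hWdef
    have hWpos : 0 < W := div_pos (mul_pos (mul_pos two_pos hC) hvn) hxn
    set B1 : ℝ := cφ * (W * (c ^ (-s) * (R + ε))) with hB1def
    -- segment properties
    have hseg : ∀ h : ℝ, h ∈ Ioc (0:ℝ) δ → ∀ σ : ℝ, σ ∈ Icc (0:ℝ) h →
        (IntegrableOn (fun t => ψ (x + σ • v) t) (Ioc 0 η) volume ∧
         (∫⁻ t in Ioc (0:ℝ) (η/c), ENNReal.ofReal (φs (x + σ • v) t)) ≤ ENNReal.ofReal (R + ε)) ∧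
        (‖x‖/2 ≤ ‖x + σ • v‖ ∧ x + σ • v ≠ 0) := by
      intro h hh σ hσ
      have hdist : dist (x + σ • v) x < ρ0 := by
        rw [dist_eq_norm, add_sub_cancel_left, norm_smul, Real.norm_eq_abs,
          abs_of_nonneg hσ.1]
        have h1 : σ * ‖v‖ ≤ h * ‖v‖ := mul_le_mul_of_nonneg_right hσ.2 hvn.le
        have h2 : h * ‖v‖ ≤ δ * ‖v‖ := mul_le_mul_of_nonneg_right hh.2 hvn.le
        have h3 : δ * ‖v‖ = ρ0 / 2 := by
          rw [hδdef]; field_simp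
        nlinarith
      obtain ⟨⟨hint, hJ⟩, hcb⟩ := hρ0 hdist
      exact ⟨⟨hint, hJ⟩, hnormlb _ hcb⟩
    -- the difference quotient bound
    have hquot : ∀ h : ℝ, h ∈ Ioc (0:ℝ) δ → |F (x + h • v) - F x| ≤ B1 * h := by
      intro h hh
      have hh0 : 0 < h := hh.1
      have hyint : IntegrableOn (fun t => ψ (x + h • v) t) (Ioc 0 η) volume :=
        ((hseg h hh h (by constructor <;> [exact hh0.le; rfl])).1).1
      -- pointwise FTC estimate in t
      have step4 : ∀ t : ℝ, t ∈ Ioc (0:ℝ) η →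
          ‖ψ (x + h • v) t - ψ x t‖ ≤
          W * (t ^ (-s - 1) * ∫ σ in (0:ℝ)..h, φ (c • (t⁻¹ • (x + σ • v)))) := by
        intro t ht
        have ht0 : (0:ℝ) < t := ht.1
        have hq : ∀ σ : ℝ, t⁻¹ • (x + σ • v) = t⁻¹ • x + σ • (t⁻¹ • v) := by
          intro σ; rw [smul_add, smul_comm]
        have hsegf : ∀ σ : ℝ, σ ∈ Icc (0:ℝ) h → (‖x‖/2 ≤ ‖x + σ • v‖ ∧ x + σ • v ≠ 0) :=
          fun σ hσ => (hseg h hh σ hσ).2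
        have hderiv : ∀ σ ∈ uIcc (0:ℝ) h,
            HasDerivAt (fun σ : ℝ => φ (t⁻¹ • (x + σ • v)))
              ((fderiv ℝ φ (t⁻¹ • (x + σ • v))) (t⁻¹ • v)) σ := by
          intro σ hσ
          have hσ' : σ ∈ Icc (0:ℝ) h := by rwa [uIcc_of_le hh0.le] at hσ
          have hz : t⁻¹ • (x + σ • v) ≠ 0 :=
            smul_ne_zero (inv_ne_zero ht0.ne') (hsegf σ hσ').2
          have hinner : HasDerivAt (fun σ : ℝ => t⁻¹ • (x + σ • v)) (t⁻¹ • v) σ := by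
            have heq : (fun σ : ℝ => t⁻¹ • (x + σ • v))
                = fun σ : ℝ => t⁻¹ • x + σ • (t⁻¹ • v) := funext hq
            rw [heq]
            simpa using ((hasDerivAt_id σ).smul_const (t⁻¹ • v)).const_add (t⁻¹ • x)
          exact ((hφdiffAt _ hz).hasFDerivAt.comp_hasDerivAt σ hinner)
        have hwcont : Continuous (fun σ : ℝ => t⁻¹ • (x + σ • v)) := by
          exact (continuous_const.add (continuous_id.smul continuous_const)).const_smul t⁻¹
        have hLcont : ContinuousOn
            (fun σ : ℝ => (fderiv ℝ φ (t⁻¹ • (x + σ • v))) (t⁻¹ • v)) (uIcc (0:ℝ) h) := by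
          apply ContinuousOn.clm_apply ?_ continuousOn_const
          apply hfdcont.comp hwcont.continuousOn
          intro σ hσ
          have hσ' : σ ∈ Icc (0:ℝ) h := by rwa [uIcc_of_le hh0.le] at hσ
          exact smul_ne_zero (inv_ne_zero ht0.ne') (hsegf σ hσ').2
        have hFTC := intervalIntegral.integral_eq_sub_of_hasDerivAt hderiv
          hLcont.intervalIntegrable
        have hLb : ∀ σ ∈ Icc (0:ℝ) h,
            |(fderiv ℝ φ (t⁻¹ • (x + σ • v))) (t⁻¹ • v)| ≤
              W * φ (c • (t⁻¹ • (x + σ • v))) := by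
          intro σ hσ
          have hxs2 : ‖x‖/2 ≤ ‖x + σ • v‖ := (hsegf σ hσ).1
          have hxs : (0:ℝ) < ‖x + σ • v‖ := lt_of_lt_of_le (half_pos hxn) hxs2
          have hz : t⁻¹ • (x + σ • v) ≠ 0 :=
            smul_ne_zero (inv_ne_zero ht0.ne') (hsegf σ hσ).2
          have hzn : ‖t⁻¹ • (x + σ • v)‖ = t⁻¹ * ‖x + σ • v‖ := by
            rw [norm_smul, Real.norm_eq_abs, abs_of_pos (inv_pos.2 ht0)]
          have hznpos : (0:ℝ) < ‖t⁻¹ • (x + σ • v)‖ := norm_pos_iff.2 hz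
          have h2 := hgrad _ hz
          have hf_le : ‖fderiv ℝ φ (t⁻¹ • (x + σ • v))‖ ≤
              C * φ (c • (t⁻¹ • (x + σ • v))) / ‖t⁻¹ • (x + σ • v)‖ := by
            rw [le_div_iff₀ hznpos]
            have h2' : ‖fderiv ℝ φ (t⁻¹ • (x + σ • v))‖ * ‖t⁻¹ • (x + σ • v)‖
                = ‖t⁻¹ • (x + σ • v)‖ * ‖fderiv ℝ φ (t⁻¹ • (x + σ • v))‖ := mul_comm _ _
            rw [h2']
            exact h2
          have h1 : |(fderiv ℝ φ (t⁻¹ • (x + σ • v))) (t⁻¹ • v)| ≤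
              ‖fderiv ℝ φ (t⁻¹ • (x + σ • v))‖ * (t⁻¹ * ‖v‖) := by
            have hle := ContinuousLinearMap.le_opNorm (fderiv ℝ φ (t⁻¹ • (x + σ • v))) (t⁻¹ • v)
            rw [norm_smul] at hle
            have hnt : ‖(t⁻¹ : ℝ)‖ = t⁻¹ := by
              rw [Real.norm_eq_abs, abs_of_pos (inv_pos.2 ht0)]
            rw [hnt] at hle
            rw [← Real.norm_eq_abs]
            exact hle
          calc |(fderiv ℝ φ (t⁻¹ • (x + σ • v))) (t⁻¹ • v)|
              ≤ ‖fderiv ℝ φ (t⁻¹ • (x + σ • v))‖ * (t⁻¹ * ‖v‖) := h1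
            _ ≤ (C * φ (c • (t⁻¹ • (x + σ • v))) / ‖t⁻¹ • (x + σ • v)‖) * (t⁻¹ * ‖v‖) := by
                apply mul_le_mul_of_nonneg_right hf_le
                positivity
            _ = C * φ (c • (t⁻¹ • (x + σ • v))) * ‖v‖ / ‖x + σ • v‖ := by
                rw [hzn]
                field_simp
            _ ≤ W * φ (c • (t⁻¹ • (x + σ • v))) := by
                rw [div_le_iff₀ hxs]
                have hφz : (0:ℝ) ≤ φ (c • (t⁻¹ • (x + σ • v))) := hφ0 _
                have hW2 : W * φ (c • (t⁻¹ • (x + σ • v))) * (‖x‖/2)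
                    = C * φ (c • (t⁻¹ • (x + σ • v))) * ‖v‖ := by
                  rw [hWdef]; field_simp
                have hmono := mul_le_mul_of_nonneg_left hxs2
                  (mul_nonneg hWpos.le hφz)
                rw [show W * φ (c • (t⁻¹ • (x + σ • v))) * (‖x‖ / 2)
                    = W * φ (c • (t⁻¹ • (x + σ • v))) * (‖x‖ / 2) from rfl] at hW2
                nlinarith [hmono, hW2]
        have hcont1 : ContinuousOn (fun σ : ℝ => φ (c • (t⁻¹ • (x + σ • v)))) (uIcc (0:ℝ) h) := by
          intro σ hσ
          have hσ' : σ ∈ Icc (0:ℝ) h := by rwa [uIcc_of_le hh0.le] at hσ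
          have hz : c • (t⁻¹ • (x + σ • v)) ≠ 0 := smul_ne_zero hc0.ne'
            (smul_ne_zero (inv_ne_zero ht0.ne') (hsegf σ hσ').2)
          exact (ContinuousAt.comp (g := φ) (f := fun σ : ℝ => c • (t⁻¹ • (x + σ • v)))
            (x := σ) (hφcontAt _ hz) ((hwcont.const_smul c).continuousAt)).continuousWithinAt
        have h0v : x + (0:ℝ) • v = x := by simp
        have habs1 : |φ (t⁻¹ • (x + h • v)) - φ (t⁻¹ • x)| ≤
            ∫ σ in (0:ℝ)..h, W * φ (c • (t⁻¹ • (x + σ • v))) := by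
          have hFTC' : φ (t⁻¹ • (x + h • v)) - φ (t⁻¹ • x)
              = ∫ σ in (0:ℝ)..h, (fderiv ℝ φ (t⁻¹ • (x + σ • v))) (t⁻¹ • v) := by
            rw [hFTC, h0v]
          rw [hFTC']
          calc |∫ σ in (0:ℝ)..h, (fderiv ℝ φ (t⁻¹ • (x + σ • v))) (t⁻¹ • v)|
              ≤ ∫ σ in (0:ℝ)..h, |(fderiv ℝ φ (t⁻¹ • (x + σ • v))) (t⁻¹ • v)| :=
                intervalIntegral.abs_integral_le_integral_abs hh0.le
            _ ≤ ∫ σ in (0:ℝ)..h, W * φ (c • (t⁻¹ • (x + σ • v))) := by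
                apply intervalIntegral.integral_mono_on hh0.le
                · exact hLcont.abs.intervalIntegrable
                · exact (continuousOn_const.mul hcont1).intervalIntegrable
                · intro σ hσ; exact hLb σ hσ
        have hrp : (0:ℝ) ≤ t ^ (-s - 1) := Real.rpow_nonneg ht0.le _
        rw [hψ_eq _ t ht0, hψ_eq x t ht0]
        have hdiffeq : φs (x + h • v) t - φs x t
            = t ^ (-s-1) * (φ (t⁻¹ • (x + h • v)) - φ (t⁻¹ • x)) := by
          show t ^ (-s-1) * φ (t⁻¹ • (x + h • v)) - t ^ (-s-1) * φ (t⁻¹ • x) = _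
          ring
        calc ‖φs (x + h • v) t - φs x t‖
            = t ^ (-s-1) * |φ (t⁻¹ • (x + h • v)) - φ (t⁻¹ • x)| := by
              rw [Real.norm_eq_abs, hdiffeq, abs_mul, abs_of_nonneg hrp]
          _ ≤ t ^ (-s-1) * ∫ σ in (0:ℝ)..h, W * φ (c • (t⁻¹ • (x + σ • v))) :=
              mul_le_mul_of_nonneg_left habs1 hrp
          _ = W * (t ^ (-s-1) * ∫ σ in (0:ℝ)..h, φ (c • (t⁻¹ • (x + σ • v)))) := by
              rw [intervalIntegral.integral_const_mul]; ring
      have hGmeas : Measurable (fun p : ℝ × ℝ =>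
          ENNReal.ofReal (p.1 ^ (-s - 1) * φ (c • (p.1⁻¹ • (x + p.2 • v))))) := by
        apply Measurable.ennreal_ofReal
        apply Measurable.mul (hrpm.comp measurable_fst)
        apply hφmeas.comp
        exact ((measurable_fst.inv).smul ((measurable_snd.smul_const v).const_add x)).const_smul c
      have hσint : ∀ t : ℝ, 0 < t → IntegrableOn
          (fun σ => φ (c • (t⁻¹ • (x + σ • v)))) (Ioc 0 h) volume := by
        intro t ht0
        apply (ContinuousOn.integrableOn_Icc ?_).mono_set Ioc_subset_Icc_self
        intro σ hσ
        have hz : c • (t⁻¹ • (x + σ • v)) ≠ 0 := smul_ne_zero hc0.ne'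
          (smul_ne_zero (inv_ne_zero ht0.ne') ((hseg h hh σ hσ).2).2)
        have hwcont2 : Continuous (fun σ : ℝ => c • (t⁻¹ • (x + σ • v))) :=
          ((continuous_const.add (continuous_id.smul continuous_const)).const_smul
            t⁻¹).const_smul c
        exact (ContinuousAt.comp (g := φ) (f := fun σ : ℝ => c • (t⁻¹ • (x + σ • v)))
          (x := σ) (hφcontAt _ hz) hwcont2.continuousAt).continuousWithinAt
      have hIsub : I (x + h • v) - I x = ∫ t in Ioc (0:ℝ) η, (ψ (x + h • v) t - ψ x t) :=
        (integral_sub hyint hxint).symm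
      have hchain : (∫⁻ t in Ioc (0:ℝ) η, ENNReal.ofReal ‖ψ (x + h • v) t - ψ x t‖)
          ≤ ENNReal.ofReal W * (ENNReal.ofReal (c ^ (-s) * (R + ε)) * ENNReal.ofReal h) := by
        calc (∫⁻ t in Ioc (0:ℝ) η, ENNReal.ofReal ‖ψ (x + h • v) t - ψ x t‖)
            ≤ ∫⁻ t in Ioc (0:ℝ) η, ENNReal.ofReal (W * (t ^ (-s-1) *
                ∫ σ in (0:ℝ)..h, φ (c • (t⁻¹ • (x + σ • v))))) :=
              lintegral_mono_ae ((ae_restrict_iff' measurableSet_Ioc).2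
                (Eventually.of_forall fun t ht => ENNReal.ofReal_le_ofReal (step4 t ht)))
          _ = ENNReal.ofReal W * ∫⁻ t in Ioc (0:ℝ) η, ∫⁻ σ in Ioc (0:ℝ) h,
                ENNReal.ofReal (t ^ (-s-1) * φ (c • (t⁻¹ • (x + σ • v)))) := by
              rw [← lintegral_const_mul' _ _ ENNReal.ofReal_ne_top]
              apply setLIntegral_congr_fun measurableSet_Ioc
              intro t ht
              have ht0 : (0:ℝ) < t := ht.1
              have hσnn : ∀ σ : ℝ, (0:ℝ) ≤ φ (c • (t⁻¹ • (x + σ • v))) := fun σ => hφ0 _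
              beta_reduce
              rw [ENNReal.ofReal_mul hWpos.le, ENNReal.ofReal_mul (Real.rpow_nonneg ht0.le _)]
              congr 1
              rw [intervalIntegral.integral_of_le hh0.le,
                ofReal_integral_eq_lintegral_ofReal (hσint t ht0)
                  (Eventually.of_forall fun σ => hσnn σ),
                ← lintegral_const_mul' _ _ ENNReal.ofReal_ne_top]
              apply lintegral_congr
              intro σ
              rw [← ENNReal.ofReal_mul (Real.rpow_nonneg ht0.le _)]
          _ = ENNReal.ofReal W * ∫⁻ σ in Ioc (0:ℝ) h, ∫⁻ t in Ioc (0:ℝ) η,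
                ENNReal.ofReal (t ^ (-s-1) * φ (c • (t⁻¹ • (x + σ • v)))) := by
              congr 1
              exact lintegral_lintegral_swap hGmeas.aemeasurable
          _ ≤ ENNReal.ofReal W * ∫⁻ σ in Ioc (0:ℝ) h,
                ENNReal.ofReal (c ^ (-s) * (R + ε)) := by
              apply mul_le_mul_right
              apply lintegral_mono_ae ((ae_restrict_iff' measurableSet_Ioc).2
                (Eventually.of_forall ?_))
              intro σ hσ
              have hg : Measurable (fun u : ℝ => ENNReal.ofReal (φs (x + σ • v) u)) :=
                (hφsmeas _).ennreal_ofReal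
              have hJσ := ((hseg h hh σ (Ioc_subset_Icc_self hσ)).1).2
              have hcongr : ∀ t : ℝ, t ∈ Ioc (0:ℝ) η →
                  ENNReal.ofReal (t ^ (-s-1) * φ (c • (t⁻¹ • (x + σ • v))))
                  = ENNReal.ofReal (c ^ (-s-1)) *
                    (fun u : ℝ => ENNReal.ofReal (φs (x + σ • v) u)) (c⁻¹ * t) := by
                intro t ht
                have ht0 : (0:ℝ) < t := ht.1
                have hscale : (c⁻¹ * t)⁻¹ • (x + σ • v) = c • (t⁻¹ • (x + σ • v)) := by
                  rw [mul_inv, inv_inv, smul_smul]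
                have hpow : t ^ (-s-1 : ℝ) = c ^ (-s-1 : ℝ) * (c⁻¹ * t) ^ (-s-1 : ℝ) := by
                  rw [Real.mul_rpow (inv_nonneg.2 hc0.le) ht0.le, ← mul_assoc,
                    ← Real.mul_rpow hc0.le (inv_nonneg.2 hc0.le), mul_inv_cancel₀ hc0.ne',
                    Real.one_rpow, one_mul]
                show ENNReal.ofReal (t ^ (-s-1) * φ (c • (t⁻¹ • (x + σ • v))))
                  = ENNReal.ofReal (c ^ (-s-1)) *
                    ENNReal.ofReal ((c⁻¹ * t) ^ (-s-1) * φ ((c⁻¹ * t)⁻¹ • (x + σ • v)))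
                rw [hscale, hpow, mul_assoc,
                  ENNReal.ofReal_mul (Real.rpow_nonneg hc0.le _)]
              calc ∫⁻ t in Ioc (0:ℝ) η,
                    ENNReal.ofReal (t ^ (-s-1) * φ (c • (t⁻¹ • (x + σ • v))))
                  = ∫⁻ t in Ioc (0:ℝ) η, ENNReal.ofReal (c ^ (-s-1)) *
                      (fun u : ℝ => ENNReal.ofReal (φs (x + σ • v) u)) (c⁻¹ * t) :=
                    setLIntegral_congr_fun measurableSet_Ioc hcongr
                _ = ENNReal.ofReal (c ^ (-s-1)) * ∫⁻ t in Ioc (0:ℝ) η,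
                      (fun u : ℝ => ENNReal.ofReal (φs (x + σ • v) u)) (c⁻¹ * t) :=
                    lintegral_const_mul' _ _ ENNReal.ofReal_ne_top
                _ = ENNReal.ofReal (c ^ (-s-1)) * (ENNReal.ofReal ((c⁻¹)⁻¹) *
                      ∫⁻ u in Ioc 0 (c⁻¹ * η), ENNReal.ofReal (φs (x + σ • v) u)) := by
                    rw [lintegral_Ioc_scale (inv_pos.2 hc0) η hg]
                _ ≤ ENNReal.ofReal (c ^ (-s-1)) * (ENNReal.ofReal c * ENNReal.ofReal (R + ε)) := by
                    rw [inv_inv]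
                    apply mul_le_mul_right
                    apply mul_le_mul_right
                    rw [show c⁻¹ * η = η / c from by rw [inv_mul_eq_div]]
                    exact hJσ
                _ = ENNReal.ofReal (c ^ (-s) * (R + ε)) := by
                    rw [← ENNReal.ofReal_mul hc0.le,
                      ← ENNReal.ofReal_mul (Real.rpow_nonneg hc0.le _)]
                    congr 1
                    have hcc : c ^ (-s-1 : ℝ) * c = c ^ (-s : ℝ) := by
                      rw [← Real.rpow_add_one hc0.ne' (-s-1)]; norm_num
                    calc c ^ (-s-1:ℝ) * (c * (R+ε)) = (c ^ (-s-1:ℝ) * c) * (R+ε) := by ring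
                      _ = c ^ (-s:ℝ) * (R+ε) := by rw [hcc]
          _ = ENNReal.ofReal W * (ENNReal.ofReal (c ^ (-s) * (R + ε)) * ENNReal.ofReal h) := by
              rw [setLIntegral_const, Real.volume_Ioc, sub_zero]
      have hTne : ENNReal.ofReal W * (ENNReal.ofReal (c ^ (-s) * (R + ε)) *
          ENNReal.ofReal h) ≠ ⊤ :=
        ENNReal.mul_ne_top ENNReal.ofReal_ne_top
          (ENNReal.mul_ne_top ENNReal.ofReal_ne_top ENNReal.ofReal_ne_top)
      have hIbnd : |I (x + h • v) - I x| ≤ W * (c ^ (-s) * (R + ε)) * h := by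
        have h3 : ‖∫ t in Ioc (0:ℝ) η, (ψ (x + h • v) t - ψ x t)‖ ≤
            (∫⁻ t in Ioc (0:ℝ) η, ENNReal.ofReal ‖ψ (x + h • v) t - ψ x t‖).toReal :=
          norm_integral_le_lintegral_norm _
        have h4 := ENNReal.toReal_mono hTne hchain
        rw [← Real.norm_eq_abs, hIsub]
        refine le_trans h3 (le_trans h4 (le_of_eq ?_))
        rw [ENNReal.toReal_mul, ENNReal.toReal_mul, ENNReal.toReal_ofReal hWpos.le,
          ENNReal.toReal_ofReal (mul_nonneg hcs_pos.le (by linarith)),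
          ENNReal.toReal_ofReal hh0.le]
        ring
      calc |F (x + h • v) - F x| = cφ * |I (x + h • v) - I x| := by
            rw [show F (x + h • v) - F x = cφ * (I (x + h • v) - I x) from by
              show cφ * I (x + h • v) - cφ * I x = _; ring, abs_mul, abs_of_nonneg hcφ]
        _ ≤ cφ * (W * (c ^ (-s) * (R + ε)) * h) := mul_le_mul_of_nonneg_left hIbnd hcφ
        _ = B1 * h := by rw [hB1def]; ring
    have hp : HasDerivAt (fun σ : ℝ => x + σ • v) v 0 := by
      simpa using ((hasDerivAt_id (0:ℝ)).smul_const v).const_add x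
    have h0v : x + (0:ℝ) • v = x := by simp
    have hline : HasDerivAt (fun σ : ℝ => F (x + σ • v)) ((fderiv ℝ F x) v) 0 := by
      have hF' : HasFDerivAt F (fderiv ℝ F x) (x + (0:ℝ) • v) := by
        rw [h0v]; exact hdiff.hasFDerivAt
      exact hF'.comp_hasDerivAt 0 hp
    have hsl := hasDerivAt_iff_tendsto_slope.1 hline
    have hslope_eq : ∀ h : ℝ, slope (fun σ : ℝ => F (x + σ • v)) 0 h
        = (F (x + h • v) - F x) / h := by
      intro h
      rw [slope_def_field]
      simp only [h0v, sub_zero]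
    have hsl2 : Tendsto (fun h : ℝ => (F (x + h • v) - F x) / h) (𝓝[>] (0:ℝ))
        (𝓝 ((fderiv ℝ F x) v)) := by
      have hmono : 𝓝[>] (0:ℝ) ≤ 𝓝[≠] (0:ℝ) :=
        nhdsWithin_mono 0 (fun a (ha : a ∈ Ioi 0) => ne_of_gt ha)
      exact (hsl.mono_left hmono).congr hslope_eq
    have habs : ‖(fderiv ℝ F x) v‖ ≤ B1 := by
      apply le_of_tendsto hsl2.norm
      filter_upwards [Ioc_mem_nhdsGT hδpos] with h hh
      rw [norm_div, Real.norm_eq_abs, Real.norm_eq_abs, abs_of_pos hh.1, div_le_iff₀ hh.1]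
      exact hquot h hh
    calc ‖(fderiv ℝ F x) v‖ ≤ B1 := habs
      _ = 2 * C * cφ * c ^ (-s) * (R + ε) * ‖v‖ / ‖x‖ := by rw [hB1def, hWdef]; ring
  have hop : ‖fderiv ℝ F x‖ ≤ 2 * C * cφ * c ^ (-s) * R / ‖x‖ := by
    apply ContinuousLinearMap.opNorm_le_bound
    · have h1 : (0:ℝ) ≤ 2 * C * cφ * c ^ (-s) * R :=
        mul_nonneg (by positivity) hRnonneg
      exact div_nonneg h1 hxn.le
    · intro v
      rcases eq_or_ne v 0 with rfl | hv
      · simp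
      have hvn : (0:ℝ) < ‖v‖ := norm_pos_iff.2 hv
      have hKpos : (0:ℝ) < 2 * C * cφ * c ^ (-s) * ‖v‖ / ‖x‖ := by
        apply div_pos _ hxn
        have h1 : (0:ℝ) < 2 * C * cφ * c ^ (-s) := by positivity
        exact mul_pos h1 hvn
      have hbnd : ∀ ε' : ℝ, 0 < ε' →
          ‖(fderiv ℝ F x) v‖ ≤ 2 * C * cφ * c ^ (-s) * R * ‖v‖ / ‖x‖ + ε' := by
        intro ε' hε'
        have h2 := key_est v hv (ε' / (2 * C * cφ * c ^ (-s) * ‖v‖ / ‖x‖))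
          (div_pos hε' hKpos)
        calc ‖(fderiv ℝ F x) v‖
            ≤ 2 * C * cφ * c ^ (-s) *
              (R + ε' / (2 * C * cφ * c ^ (-s) * ‖v‖ / ‖x‖)) * ‖v‖ / ‖x‖ := h2
          _ = 2 * C * cφ * c ^ (-s) * R * ‖v‖ / ‖x‖ +
              (2 * C * cφ * c ^ (-s) * ‖v‖ / ‖x‖) *
                (ε' / (2 * C * cφ * c ^ (-s) * ‖v‖ / ‖x‖)) := by ring
          _ = 2 * C * cφ * c ^ (-s) * R * ‖v‖ / ‖x‖ + ε' := by
              rw [mul_div_cancel₀ _ hKpos.ne']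
      have hfin : ‖(fderiv ℝ F x) v‖ ≤ 2 * C * cφ * c ^ (-s) * R * ‖v‖ / ‖x‖ := by
        by_contra hcon
        push_neg at hcon
        have h5 := hbnd ((‖(fderiv ℝ F x) v‖ - 2 * C * cφ * c ^ (-s) * R * ‖v‖ / ‖x‖) / 2)
          (by linarith)
        linarith
      calc ‖(fderiv ℝ F x) v‖ ≤ 2 * C * cφ * c ^ (-s) * R * ‖v‖ / ‖x‖ := hfin
        _ = 2 * C * cφ * c ^ (-s) * R / ‖x‖ * ‖v‖ := by ring
  calc ‖x‖ * ‖fderiv ℝ F x‖ ≤ ‖x‖ * (2 * C * cφ * c ^ (-s) * R / ‖x‖) :=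
        mul_le_mul_of_nonneg_left hop (norm_nonneg x)
    _ = 2 * C * c ^ (-s) * (cφ * R) := by field_simp
end

section
/- Let 0 ≤ s < d, let φ satisfy the truncation-scheme hypotheses including the decay φ(x) ≤ C_γ⟨x⟩^{-γ} for some γ > d, and let d/(d−s) < p ≤ ∞. Then there is C = C(d,s,p,φ,γ) such that for all η > 0 and all μ ∈ L¹∩L^p(ℝ^d) with μ ≥ 0: ‖f_η ∗ μ‖_{L^∞} ≤ C ‖μ‖_{L^p} η^{d(p−1)/p − s}. -/
open MeasureTheory Filter Set
open scoped ENNReal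

private lemma shell_piece (d : ℕ) (a u v : ℝ) (ha : 0 ≤ a) (hu : 0 < u) (hv : 0 ≤ v) :
    ∫⁻ z in {z : EuclideanSpace ℝ (Fin d) | u < ‖z‖ ∧ ‖z‖ ≤ v}, ENNReal.ofReal (‖z‖ ^ (-a)) ≤
      ENNReal.ofReal (u ^ (-a) * v ^ d) * volume (Metric.ball (0 : EuclideanSpace ℝ (Fin d)) 1) := by
  have hmeas : MeasurableSet {z : EuclideanSpace ℝ (Fin d) | u < ‖z‖ ∧ ‖z‖ ≤ v} := by
    apply MeasurableSet.inter
    · exact measurableSet_lt measurable_const measurable_norm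
    · exact measurableSet_le measurable_norm measurable_const
  calc ∫⁻ z in {z : EuclideanSpace ℝ (Fin d) | u < ‖z‖ ∧ ‖z‖ ≤ v}, ENNReal.ofReal (‖z‖ ^ (-a))
      ≤ ∫⁻ _z in {z : EuclideanSpace ℝ (Fin d) | u < ‖z‖ ∧ ‖z‖ ≤ v}, ENNReal.ofReal (u ^ (-a)) := by
        refine setLIntegral_mono' hmeas fun z hz => ?_
        exact ENNReal.ofReal_le_ofReal
          (Real.rpow_le_rpow_of_nonpos hu hz.1.le (neg_nonpos.mpr ha))
    _ = ENNReal.ofReal (u ^ (-a)) * volume {z : EuclideanSpace ℝ (Fin d) | u < ‖z‖ ∧ ‖z‖ ≤ v} :=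
        setLIntegral_const _ _
    _ ≤ ENNReal.ofReal (u ^ (-a)) *
          (ENNReal.ofReal (v ^ d) * volume (Metric.ball (0 : EuclideanSpace ℝ (Fin d)) 1)) := by
        gcongr
        have : {z : EuclideanSpace ℝ (Fin d) | u < ‖z‖ ∧ ‖z‖ ≤ v} ⊆ Metric.closedBall 0 v := by
          intro z hz; simpa [Metric.mem_closedBall, dist_zero_right] using hz.2
        refine (measure_mono this).trans ?_
        rw [Measure.addHaar_closedBall _ _ hv, finrank_euclideanSpace_fin]
    _ = ENNReal.ofReal (u ^ (-a) * v ^ d) * volume (Metric.ball (0 : EuclideanSpace ℝ (Fin d)) 1) := by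
        rw [ENNReal.ofReal_mul (Real.rpow_nonneg hu.le _), mul_assoc]

private lemma pow_algebra1 (d : ℕ) (a η : ℝ) (hη : 0 < η) (n : ℕ) :
    (η / 2 ^ (n + 1)) ^ (-a) * (η / 2 ^ n) ^ d =
      η ^ ((d : ℝ) - a) * 2 ^ a * ((2 : ℝ) ^ (a - (d : ℝ))) ^ n := by
  have h1 : (0:ℝ) < (η / 2 ^ (n + 1)) ^ (-a) := Real.rpow_pos_of_pos (by positivity) _
  have h2 : (0:ℝ) < (η / 2 ^ n) ^ d := by positivity
  have h3 : (0:ℝ) < η ^ ((d : ℝ) - a) := Real.rpow_pos_of_pos hη _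
  have h4 : (0:ℝ) < (2:ℝ) ^ a := Real.rpow_pos_of_pos two_pos _
  have h5 : (0:ℝ) < ((2 : ℝ) ^ (a - (d : ℝ))) ^ n := by positivity
  rw [← Real.exp_log (by positivity : (0:ℝ) < (η / 2 ^ (n + 1)) ^ (-a) * (η / 2 ^ n) ^ d),
    ← Real.exp_log (by positivity : (0:ℝ) <
      η ^ ((d : ℝ) - a) * 2 ^ a * ((2 : ℝ) ^ (a - (d : ℝ))) ^ n)]
  congr 1
  rw [Real.log_mul h1.ne' h2.ne', Real.log_mul (mul_pos h3 h4).ne' h5.ne',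
    Real.log_mul h3.ne' h4.ne', Real.log_rpow (by positivity), Real.log_pow,
    Real.log_pow, Real.log_rpow two_pos, Real.log_rpow hη, Real.log_rpow two_pos,
    Real.log_div hη.ne' (by positivity), Real.log_div hη.ne' (by positivity),
    Real.log_pow, Real.log_pow]
  push_cast
  ring

private lemma vol_singleton_zero (d : ℕ) (hd : 1 ≤ d) (w : EuclideanSpace ℝ (Fin d)) :
    volume ({w} : Set (EuclideanSpace ℝ (Fin d))) = 0 := by
  rw [← Metric.closedBall_zero, Measure.addHaar_closedBall _ _ le_rfl,
    finrank_euclideanSpace_fin, zero_pow (by omega), ENNReal.ofReal_zero, zero_mul]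

private lemma shell_ball (d : ℕ) (hd : 1 ≤ d) (a : ℝ) (ha : 0 < a) (had : a < d) :
    ∃ K : ℝ≥0∞, K ≠ ∞ ∧ ∀ η : ℝ, 0 < η →
      ∫⁻ z in {z : EuclideanSpace ℝ (Fin d) | ‖z‖ ≤ η}, ENNReal.ofReal (‖z‖ ^ (-a)) ≤
        ENNReal.ofReal (η ^ ((d : ℝ) - a)) * K := by
  classical
  set mB := volume (Metric.ball (0 : EuclideanSpace ℝ (Fin d)) 1) with hmB
  have hw : (0:ℝ) < (2:ℝ) ^ (a - (d:ℝ)) := Real.rpow_pos_of_pos two_pos _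
  have hr1 : ENNReal.ofReal ((2:ℝ) ^ (a - (d:ℝ))) < 1 := by
    rw [← ENNReal.ofReal_one]
    exact (ENNReal.ofReal_lt_ofReal_iff_of_nonneg hw.le).mpr
      (Real.rpow_lt_one_of_one_lt_of_neg one_lt_two (by linarith))
  refine ⟨ENNReal.ofReal (2 ^ a) * (∑' n : ℕ, ENNReal.ofReal ((2:ℝ) ^ (a - (d:ℝ))) ^ n) * mB,
    ?_, ?_⟩
  · rw [ENNReal.tsum_geometric]
    refine ENNReal.mul_ne_top (ENNReal.mul_ne_top ENNReal.ofReal_ne_top ?_) measure_ball_lt_top.ne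
    exact ENNReal.inv_ne_top.mpr (tsub_pos_of_lt hr1).ne'
  · intro η hη
    set A : ℕ → Set (EuclideanSpace ℝ (Fin d)) :=
      fun n => {z | η / 2 ^ (n + 1) < ‖z‖ ∧ ‖z‖ ≤ η / 2 ^ n} with hA
    have hcover : {z : EuclideanSpace ℝ (Fin d) | ‖z‖ ≤ η} ⊆ {0} ∪ ⋃ n, A n := by
      intro z hz
      by_cases hz0 : z = 0
      · exact Or.inl hz0
      · right
        have hr : 0 < ‖z‖ := norm_pos_iff.mpr hz0
        have hex : ∃ n : ℕ, η / 2 ^ (n + 1) < ‖z‖ := by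
          obtain ⟨n, hn⟩ := exists_pow_lt_of_lt_one (div_pos hr hη) (by norm_num : (2⁻¹ : ℝ) < 1)
          refine ⟨n, ?_⟩
          have h1 : η / 2 ^ (n + 1) < η / 2 ^ n := by
            apply div_lt_div_of_pos_left hη (by positivity)
            exact pow_lt_pow_right₀ one_lt_two (Nat.lt_succ_self n)
          have h2 : η / 2 ^ n < ‖z‖ := by
            have h3 := (lt_div_iff₀ hη).mp hn
            calc η / 2 ^ n = 2⁻¹ ^ n * η := by rw [inv_pow]; ring
              _ < ‖z‖ := h3
          exact h1.trans h2
        refine mem_iUnion.mpr ⟨Nat.find hex, Nat.find_spec hex, ?_⟩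
        rcases n0 : Nat.find hex with _ | k
        · simpa using hz
        · exact not_lt.mp (Nat.find_min hex (by omega))
    have hshell : ∀ n, ∫⁻ z in A n, ENNReal.ofReal (‖z‖ ^ (-a)) ≤
        ENNReal.ofReal (η ^ ((d:ℝ) - a) * 2 ^ a * ((2:ℝ) ^ (a - (d:ℝ))) ^ n) * mB := by
      intro n
      have h := shell_piece d a (η / 2 ^ (n + 1)) (η / 2 ^ n) ha.le (by positivity) (by positivity)
      rwa [pow_algebra1 d a η hη n] at h
    calc ∫⁻ z in {z : EuclideanSpace ℝ (Fin d) | ‖z‖ ≤ η}, ENNReal.ofReal (‖z‖ ^ (-a))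
        ≤ ∫⁻ z in ({0} ∪ ⋃ n, A n), ENNReal.ofReal (‖z‖ ^ (-a)) := lintegral_mono_set hcover
      _ ≤ (∫⁻ z in ({0} : Set (EuclideanSpace ℝ (Fin d))), ENNReal.ofReal (‖z‖ ^ (-a)))
            + ∫⁻ z in ⋃ n, A n, ENNReal.ofReal (‖z‖ ^ (-a)) := lintegral_union_le _ _ _
      _ ≤ 0 + ∑' n, ∫⁻ z in A n, ENNReal.ofReal (‖z‖ ^ (-a)) := by
          gcongr
          · rw [Measure.restrict_eq_zero.mpr (vol_singleton_zero d hd 0), lintegral_zero_measure]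
          · exact lintegral_iUnion_le _ _
      _ ≤ 0 + ∑' n, ENNReal.ofReal (η ^ ((d:ℝ) - a) * 2 ^ a * ((2:ℝ) ^ (a - (d:ℝ))) ^ n) * mB := by
          gcongr with n
          exact hshell n
      _ = ENNReal.ofReal (η ^ ((d : ℝ) - a)) *
            (ENNReal.ofReal (2 ^ a) * (∑' n : ℕ, ENNReal.ofReal ((2:ℝ) ^ (a - (d:ℝ))) ^ n) * mB) := by
          rw [zero_add]
          have he : ∀ n : ℕ, ENNReal.ofReal (η ^ ((d:ℝ) - a) * 2 ^ a * ((2:ℝ) ^ (a - (d:ℝ))) ^ n) * mB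
              = (ENNReal.ofReal (η ^ ((d:ℝ) - a)) * ENNReal.ofReal ((2:ℝ) ^ a) * mB)
                  * ENNReal.ofReal ((2:ℝ) ^ (a - (d:ℝ))) ^ n := by
            intro n
            rw [ENNReal.ofReal_mul (by positivity), ENNReal.ofReal_mul (by positivity),
              ENNReal.ofReal_pow hw.le]
            ring
          rw [tsum_congr he, ENNReal.tsum_mul_left]
          ring

private lemma pow_algebra2 (d : ℕ) (b η : ℝ) (hη : 0 < η) (n : ℕ) :
    (η * 2 ^ n) ^ (-b) * (η * 2 ^ (n + 1)) ^ d =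
      η ^ ((d : ℝ) - b) * 2 ^ (d : ℝ) * ((2 : ℝ) ^ ((d : ℝ) - b)) ^ n := by
  have h1 : (0:ℝ) < (η * 2 ^ n) ^ (-b) := Real.rpow_pos_of_pos (by positivity) _
  have h2 : (0:ℝ) < (η * 2 ^ (n + 1)) ^ d := by positivity
  have h3 : (0:ℝ) < η ^ ((d : ℝ) - b) := Real.rpow_pos_of_pos hη _
  have h4 : (0:ℝ) < (2:ℝ) ^ (d : ℝ) := Real.rpow_pos_of_pos two_pos _
  have h5 : (0:ℝ) < ((2 : ℝ) ^ ((d : ℝ) - b)) ^ n := by positivity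
  rw [← Real.exp_log (mul_pos h1 h2), ← Real.exp_log (mul_pos (mul_pos h3 h4) h5)]
  congr 1
  rw [Real.log_mul h1.ne' h2.ne', Real.log_mul (mul_pos h3 h4).ne' h5.ne',
    Real.log_mul h3.ne' h4.ne', Real.log_rpow (by positivity), Real.log_pow,
    Real.log_pow, Real.log_rpow two_pos, Real.log_rpow hη, Real.log_rpow two_pos,
    Real.log_mul hη.ne' (by positivity), Real.log_mul hη.ne' (by positivity),
    Real.log_pow, Real.log_pow]
  push_cast
  ring

private lemma shell_tail (d : ℕ) (hd : 1 ≤ d) (b : ℝ) (hb : (d:ℝ) < b) :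
    ∃ K : ℝ≥0∞, K ≠ ∞ ∧ ∀ η : ℝ, 0 < η →
      ∫⁻ z in {z : EuclideanSpace ℝ (Fin d) | η < ‖z‖}, ENNReal.ofReal (‖z‖ ^ (-b)) ≤
        ENNReal.ofReal (η ^ ((d : ℝ) - b)) * K := by
  classical
  have hb0 : 0 < b := lt_of_le_of_lt (by positivity) hb
  set mB := volume (Metric.ball (0 : EuclideanSpace ℝ (Fin d)) 1) with hmB
  have hw : (0:ℝ) < (2:ℝ) ^ ((d:ℝ) - b) := Real.rpow_pos_of_pos two_pos _
  have hr1 : ENNReal.ofReal ((2:ℝ) ^ ((d:ℝ) - b)) < 1 := by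
    rw [← ENNReal.ofReal_one]
    exact (ENNReal.ofReal_lt_ofReal_iff_of_nonneg hw.le).mpr
      (Real.rpow_lt_one_of_one_lt_of_neg one_lt_two (by linarith))
  refine ⟨ENNReal.ofReal (2 ^ (d:ℝ)) * (∑' n : ℕ, ENNReal.ofReal ((2:ℝ) ^ ((d:ℝ) - b)) ^ n) * mB,
    ?_, ?_⟩
  · rw [ENNReal.tsum_geometric]
    refine ENNReal.mul_ne_top (ENNReal.mul_ne_top ENNReal.ofReal_ne_top ?_) measure_ball_lt_top.ne
    exact ENNReal.inv_ne_top.mpr (tsub_pos_of_lt hr1).ne'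
  · intro η hη
    set A : ℕ → Set (EuclideanSpace ℝ (Fin d)) :=
      fun n => {z | η * 2 ^ n < ‖z‖ ∧ ‖z‖ ≤ η * 2 ^ (n + 1)} with hA
    have hcover : {z : EuclideanSpace ℝ (Fin d) | η < ‖z‖} ⊆ ⋃ n, A n := by
      intro z hz
      have hz' : η < ‖z‖ := hz
      have hex : ∃ n : ℕ, ‖z‖ ≤ η * 2 ^ (n + 1) := by
        obtain ⟨n, hn⟩ := pow_unbounded_of_one_lt (‖z‖ / η) (by norm_num : (1:ℝ) < 2)
        refine ⟨n, ?_⟩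
        have : ‖z‖ / η < 2 ^ (n + 1) := hn.trans (pow_lt_pow_right₀ one_lt_two (Nat.lt_succ_self n))
        calc ‖z‖ = (‖z‖ / η) * η := by field_simp
          _ ≤ 2 ^ (n + 1) * η := by nlinarith [this, hη]
          _ = η * 2 ^ (n + 1) := by ring
      refine mem_iUnion.mpr ⟨Nat.find hex, ?_, Nat.find_spec hex⟩
      rcases n0 : Nat.find hex with _ | k
      · simpa using hz'
      · exact not_le.mp (Nat.find_min hex (by omega))
    have hshell : ∀ n, ∫⁻ z in A n, ENNReal.ofReal (‖z‖ ^ (-b)) ≤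
        ENNReal.ofReal (η ^ ((d:ℝ) - b) * 2 ^ (d:ℝ) * ((2:ℝ) ^ ((d:ℝ) - b)) ^ n) * mB := by
      intro n
      have h := shell_piece d b (η * 2 ^ n) (η * 2 ^ (n + 1)) hb0.le (by positivity) (by positivity)
      rwa [pow_algebra2 d b η hη n] at h
    calc ∫⁻ z in {z : EuclideanSpace ℝ (Fin d) | η < ‖z‖}, ENNReal.ofReal (‖z‖ ^ (-b))
        ≤ ∫⁻ z in ⋃ n, A n, ENNReal.ofReal (‖z‖ ^ (-b)) := lintegral_mono_set hcover
      _ ≤ ∑' n, ∫⁻ z in A n, ENNReal.ofReal (‖z‖ ^ (-b)) := lintegral_iUnion_le _ _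
      _ ≤ ∑' n, ENNReal.ofReal (η ^ ((d:ℝ) - b) * 2 ^ (d:ℝ) * ((2:ℝ) ^ ((d:ℝ) - b)) ^ n) * mB := by
          gcongr with n
          exact hshell n
      _ = ENNReal.ofReal (η ^ ((d : ℝ) - b)) *
            (ENNReal.ofReal (2 ^ (d:ℝ)) * (∑' n : ℕ, ENNReal.ofReal ((2:ℝ) ^ ((d:ℝ) - b)) ^ n) * mB) := by
          have he : ∀ n : ℕ, ENNReal.ofReal (η ^ ((d:ℝ) - b) * 2 ^ (d:ℝ) * ((2:ℝ) ^ ((d:ℝ) - b)) ^ n) * mB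
              = (ENNReal.ofReal (η ^ ((d:ℝ) - b)) * ENNReal.ofReal ((2:ℝ) ^ (d:ℝ)) * mB)
                  * ENNReal.ofReal ((2:ℝ) ^ ((d:ℝ) - b)) ^ n := by
            intro n
            rw [ENNReal.ofReal_mul (by positivity), ENNReal.ofReal_mul (by positivity),
              ENNReal.ofReal_pow hw.le]
            ring
          rw [tsum_congr he, ENNReal.tsum_mul_left]
          ring

private lemma psi_rpow_bound (γ Cγ : ℝ) (hCγ : 0 < Cγ) (ψ : ℝ → ℝ)
    (hdecay : ∀ r : ℝ, 0 ≤ r → ψ r ≤ Cγ * (1 + r ^ 2) ^ (-γ / 2)) (β : ℝ) (hβ0 : 0 ≤ β)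
    (hβγ : β ≤ γ) (r : ℝ) (hr : 0 < r) : ψ r ≤ Cγ * r ^ (-β) := by
  refine (hdecay r hr.le).trans ?_
  have hγ0 : 0 ≤ γ := hβ0.trans hβγ
  gcongr
  rcases le_total r 1 with h1 | h1
  · have e1 : (1 + r ^ 2 : ℝ) ^ (-γ / 2) ≤ 1 :=
      Real.rpow_le_one_of_one_le_of_nonpos (by nlinarith) (by linarith)
    have e2 : (1 : ℝ) ≤ r ^ (-β) :=
      Real.one_le_rpow_of_pos_of_le_one_of_nonpos hr h1 (by linarith)
    linarith
  · have e1 : (1 + r ^ 2 : ℝ) ^ (-γ / 2) ≤ (r ^ 2 : ℝ) ^ (-γ / 2) :=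
      Real.rpow_le_rpow_of_nonpos (by positivity) (by nlinarith) (by linarith)
    have e2 : (r ^ 2 : ℝ) ^ (-γ / 2) = r ^ (-γ) := by
      rw [← Real.rpow_natCast r 2, ← Real.rpow_mul hr.le]
      congr 1
      ring
    have e3 : r ^ (-γ) ≤ r ^ (-β) := Real.rpow_le_rpow_of_exponent_le h1 (by linarith)
    rw [e2] at e1
    linarith

private lemma kernel_bound (d : ℕ) (s : ℝ) (hs : 0 ≤ s) (ψ : ℝ → ℝ) (hψ0 : ∀ r, 0 ≤ ψ r)
    (γ Cγ : ℝ) (hCγ : 0 < Cγ)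
    (hdecay : ∀ r : ℝ, 0 ≤ r → ψ r ≤ Cγ * (1 + r ^ 2) ^ (-γ / 2)) (c : ℝ) (hc : 0 ≤ c)
    (η : ℝ) (hη : 0 < η) (β : ℝ) (hβs : s < β) (hβγ : β ≤ γ) (z : ℝ) (hz : 0 < z) :
    c * ∫ t in Ioc (0:ℝ) η, t ^ ((d:ℝ) - s) * (t ^ (-(d:ℝ)) * ψ (z / t)) / t ≤
      c * Cγ / (β - s) * η ^ (β - s) * z ^ (-β) := by
  have hβ0 : 0 ≤ β := hs.trans hβs.le
  have hint : IntegrableOn (fun t : ℝ => Cγ * z ^ (-β) * t ^ (β - s - 1)) (Ioc 0 η) := by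
    refine Integrable.const_mul ?_ _
    exact (intervalIntegrable_iff_integrableOn_Ioc_of_le hη.le).mp
      (intervalIntegral.intervalIntegrable_rpow' (by linarith))
  have hmono : ∫ t in Ioc (0:ℝ) η, t ^ ((d:ℝ) - s) * (t ^ (-(d:ℝ)) * ψ (z / t)) / t ≤
      ∫ t in Ioc (0:ℝ) η, Cγ * z ^ (-β) * t ^ (β - s - 1) := by
    refine integral_mono_of_nonneg ?_ hint ?_
    · refine (ae_restrict_iff' measurableSet_Ioc).mpr (ae_of_all _ fun t ht => ?_)
      have ht0 : 0 < t := ht.1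
      exact div_nonneg (mul_nonneg (Real.rpow_nonneg ht0.le _)
        (mul_nonneg (Real.rpow_nonneg ht0.le _) (hψ0 _))) ht0.le
    · refine (ae_restrict_iff' measurableSet_Ioc).mpr (ae_of_all _ fun t ht => ?_)
      have ht0 : 0 < t := ht.1
      have hpsi : ψ (z / t) ≤ Cγ * (z / t) ^ (-β) :=
        psi_rpow_bound γ Cγ hCγ ψ hdecay β hβ0 hβγ _ (div_pos hz ht0)
      have hco : (0:ℝ) < t ^ ((d:ℝ) - s) * t ^ (-(d:ℝ)) / t := by
        have := Real.rpow_pos_of_pos ht0 ((d:ℝ) - s)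
        have := Real.rpow_pos_of_pos ht0 (-(d:ℝ))
        positivity
      have hre : t ^ ((d:ℝ) - s) * (t ^ (-(d:ℝ)) * ψ (z / t)) / t =
          (t ^ ((d:ℝ) - s) * t ^ (-(d:ℝ)) / t) * ψ (z / t) := by ring
      dsimp only
      rw [hre]
      calc (t ^ ((d:ℝ) - s) * t ^ (-(d:ℝ)) / t) * ψ (z / t)
          ≤ (t ^ ((d:ℝ) - s) * t ^ (-(d:ℝ)) / t) * (Cγ * (z / t) ^ (-β)) := by
            exact mul_le_mul_of_nonneg_left hpsi hco.le
        _ = Cγ * z ^ (-β) * t ^ (β - s - 1) := by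
            have p1 : (0:ℝ) < t ^ ((d:ℝ) - s) := Real.rpow_pos_of_pos ht0 _
            have p2 : (0:ℝ) < t ^ (-(d:ℝ)) := Real.rpow_pos_of_pos ht0 _
            have p3 : (0:ℝ) < (z / t) ^ (-β) := Real.rpow_pos_of_pos (div_pos hz ht0) _
            have p4 : (0:ℝ) < z ^ (-β) := Real.rpow_pos_of_pos hz _
            have p5 : (0:ℝ) < t ^ (β - s - 1) := Real.rpow_pos_of_pos ht0 _
            rw [← Real.exp_log (show (0:ℝ) < t ^ ((d:ℝ) - s) * t ^ (-(d:ℝ)) / t * (Cγ * (z / t) ^ (-β)) by positivity),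
              ← Real.exp_log (show (0:ℝ) < Cγ * z ^ (-β) * t ^ (β - s - 1) by positivity)]
            congr 1
            rw [Real.log_mul (div_pos (mul_pos p1 p2) ht0).ne' (mul_pos hCγ p3).ne',
              Real.log_mul hCγ.ne' p3.ne',
              Real.log_mul (mul_pos hCγ p4).ne' p5.ne',
              Real.log_mul hCγ.ne' p4.ne',
              Real.log_div (mul_pos p1 p2).ne' ht0.ne',
              Real.log_mul p1.ne' p2.ne',
              Real.log_rpow ht0, Real.log_rpow ht0,
              Real.log_rpow (div_pos hz ht0), Real.log_rpow hz, Real.log_rpow ht0,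
              Real.log_div hz.ne' ht0.ne']
            ring
  have hval : ∫ t in Ioc (0:ℝ) η, Cγ * z ^ (-β) * t ^ (β - s - 1) =
      Cγ * z ^ (-β) * (η ^ (β - s) / (β - s)) := by
    rw [integral_const_mul]
    congr 1
    rw [← intervalIntegral.integral_of_le hη.le,
      integral_rpow (Or.inl (by linarith : (-1:ℝ) < β - s - 1))]
    rw [Real.zero_rpow (by linarith : β - s - 1 + 1 ≠ 0)]
    norm_num
  calc c * ∫ t in Ioc (0:ℝ) η, t ^ ((d:ℝ) - s) * (t ^ (-(d:ℝ)) * ψ (z / t)) / t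
      ≤ c * (Cγ * z ^ (-β) * (η ^ (β - s) / (β - s))) := by
        rw [← hval]; exact mul_le_mul_of_nonneg_left hmono hc
    _ = c * Cγ / (β - s) * η ^ (β - s) * z ^ (-β) := by
        field_simp

set_option maxHeartbeats 1000000 in
/-- `L^∞` bound on the convolution of the small-scale part
`f_η(x) = c_{φ,d,s} ∫₀^η t^{d-s} φ_t(x) dt/t` (with radial profile `ψ`, decay
`ψ(r) ≤ C_γ (1+r²)^{-γ/2}`, `γ > d`) with a nonnegative density `μ ∈ L¹ ∩ L^p`,
`d/(d-s) < p ≤ ∞`: `‖f_η ∗ μ‖_∞ ≤ C ‖μ‖_{L^p} η^{d(p-1)/p - s}`.  The exponent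
`d(p-1)/p - s` is written as `d(1 - 1/p) - s`, which also covers `p = ∞`. -/
theorem small_scale_convolution_bound (d : ℕ) (hd : 1 ≤ d) (s : ℝ) (hs : 0 ≤ s)
    (hsd : s < d)
    (ψ : ℝ → ℝ) (hψ0 : ∀ r, 0 ≤ ψ r) (hcont : Continuous ψ)
    (hdec : ∀ r₁ r₂ : ℝ, 0 ≤ r₁ → r₁ ≤ r₂ → ψ r₂ ≤ ψ r₁)
    (γ Cγ : ℝ) (hγ : (d:ℝ) < γ) (hCγ : 0 < Cγ)
    (hdecay : ∀ r : ℝ, 0 ≤ r → ψ r ≤ Cγ * (1 + r ^ 2) ^ (-γ / 2))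
    (c : ℝ) (hc : 0 ≤ c)
    (p : ℝ≥0∞) (hp : ENNReal.ofReal ((d:ℝ) / ((d:ℝ) - s)) < p) :
    ∃ C : ℝ, 0 < C ∧ ∀ η : ℝ, 0 < η →
      ∀ μ : EuclideanSpace ℝ (Fin d) → ℝ, Integrable μ → MemLp μ p →
        (∀ x, 0 ≤ μ x) →
      ∀ x : EuclideanSpace ℝ (Fin d),
        |∫ y, (c * ∫ t in Ioc (0:ℝ) η,
            t ^ ((d:ℝ) - s) * (t ^ (-(d:ℝ)) * ψ (‖x - y‖ / t)) / t) * μ y|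
          ≤ C * (eLpNorm μ p volume).toReal
              * η ^ ((d:ℝ) * (1 - 1 / p.toReal) - s) := by
  classical
  have hd0 : (0:ℝ) < d := by exact_mod_cast Nat.pos_of_ne_zero (by omega)
  have hds0 : (0:ℝ) < (d:ℝ) - s := by linarith
  set pt := p.toReal with hpt
  set D : ℝ := (d:ℝ) * (1 - 1 / pt) with hD
  -- basic exponent facts
  have hp1 : (1:ℝ≥0∞) < p := by
    refine lt_of_le_of_lt ?_ hp
    rw [← ENNReal.ofReal_one]
    exact ENNReal.ofReal_le_ofReal ((one_le_div hds0).mpr (by linarith))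
  have hsD : s < D := by
    by_cases hptop : p = ∞
    · have : pt = 0 := by rw [hpt, hptop]; simp
      rw [hD, this]
      simp only [div_zero, sub_zero, mul_one]
      linarith
    · have h1 : (d:ℝ)/((d:ℝ)-s) < pt :=
        (ENNReal.ofReal_lt_iff_lt_toReal (by positivity) hptop).mp hp
      have hpt0 : 0 < pt := lt_of_le_of_lt (by positivity) h1
      have h2 : (d:ℝ) < pt * ((d:ℝ) - s) := by
        rw [div_lt_iff₀ hds0] at h1; linarith
      rw [hD]
      rw [show (d:ℝ) * (1 - 1/pt) = (d:ℝ) - (d:ℝ)/pt by field_simp]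
      have : (d:ℝ)/pt < (d:ℝ) - s := by
        rw [div_lt_iff₀ hpt0]; nlinarith
      linarith
  have hpt_nonneg : 0 ≤ pt := ENNReal.toReal_nonneg
  have hptinv : 0 ≤ 1/pt := by positivity
  have hDd : D ≤ (d:ℝ) := by
    rw [hD]; nlinarith
  have hD0 : 0 < D := lt_of_le_of_lt hs hsD
  set qR : ℝ := (d:ℝ) / D with hqR
  have hqR0 : 0 < qR := by positivity
  have hqR1 : 1 ≤ qR := (one_le_div hD0).mpr hDd
  set qE : ℝ≥0∞ := ENNReal.ofReal qR with hqE
  have hqE0 : qE ≠ 0 := by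
    rw [hqE]; simpa using hqR0
  have hqEtop : qE ≠ ∞ := ENNReal.ofReal_ne_top
  have hqEtoReal : qE.toReal = qR := by rw [hqE]; exact ENNReal.toReal_ofReal hqR0.le
  have hconj : (1:ℝ≥0∞)/1 = 1/qE + 1/p := by
    by_cases hptop : p = ∞
    · have hpt0 : pt = 0 := by rw [hpt, hptop]; simp
      have hDeq : D = d := by rw [hD, hpt0]; simp
      have : qE = 1 := by
        rw [hqE, hqR, hDeq, div_self hd0.ne', ENNReal.ofReal_one]
      rw [this, hptop]
      simp
    · have h1 : (d:ℝ)/((d:ℝ)-s) < pt :=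
        (ENNReal.ofReal_lt_iff_lt_toReal (by positivity) hptop).mp hp
      have hpt0 : 0 < pt := lt_of_le_of_lt (by positivity) h1
      have hpt1 : 1 ≤ pt :=
        le_of_lt (lt_of_le_of_lt ((one_le_div hds0).mpr (by linarith)) h1)
      have h2 : (0:ℝ) < 1 - 1/pt := by
        have h3 := hD0
        rw [hD] at h3
        nlinarith
      have hqRinv : qR⁻¹ = 1 - 1/pt := by
        rw [hqR, hD]
        rw [one_div, mul_comm, inv_div]
        rw [div_eq_iff hd0.ne']
        try ring
      have hqinv : 1/qE = ENNReal.ofReal (1 - 1/pt) := by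
        rw [hqE, one_div, ← ENNReal.ofReal_inv_of_pos hqR0, hqRinv]
      have hpinv : 1/p = ENNReal.ofReal (1/pt) := by
        conv_lhs => rw [← ENNReal.ofReal_toReal hptop]
        rw [one_div, ← ENNReal.ofReal_inv_of_pos hpt0, one_div]
      rw [hqinv, hpinv, ← ENNReal.ofReal_add (by linarith) (by positivity)]
      norm_num
  -- β's and shell exponents
  set β₁ : ℝ := (s + D)/2 with hβ₁
  set β₂ : ℝ := ((d:ℝ) + γ)/2 with hβ₂
  have hβ₁s : s < β₁ := by rw [hβ₁]; linarith
  have hβ₁D : β₁ < D := by rw [hβ₁]; linarith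
  have hβ₁γ : β₁ ≤ γ := by rw [hβ₁]; linarith
  have hβ₂s : s < β₂ := by rw [hβ₂]; linarith
  have hβ₂d : (d:ℝ) < β₂ := by rw [hβ₂]; linarith
  have hβ₂γ : β₂ ≤ γ := by rw [hβ₂]; linarith
  have hβ₁0 : 0 < β₁ := lt_of_le_of_lt hs hβ₁s
  set a : ℝ := β₁ * qR with ha
  set b : ℝ := β₂ * qR with hb
  have ha0 : 0 < a := by positivity
  have hqRD : qR * D = d := by rw [hqR]; exact div_mul_cancel₀ _ hD0.ne'
  have haD : a < d := by
    rw [ha, ← hqRD]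
    have := mul_lt_mul_of_pos_right hβ₁D hqR0
    nlinarith
  have hbD : (d:ℝ) < b := by
    rw [hb, ← hqRD]
    have h1 : D < β₂ := lt_of_le_of_lt hDd hβ₂d
    nlinarith
  obtain ⟨K₁, hK₁top, hK₁⟩ := shell_ball d hd a ha0 haD
  obtain ⟨K₂, hK₂top, hK₂⟩ := shell_tail d hd b hbD
  set M₁ : ℝ := c * Cγ / (β₁ - s) with hM₁
  set M₂ : ℝ := c * Cγ / (β₂ - s) with hM₂
  have hM₁0 : 0 ≤ M₁ := by
    rw [hM₁]
    have h1 : (0:ℝ) < β₁ - s := by linarith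
    exact div_nonneg (mul_nonneg hc hCγ.le) h1.le
  have hM₂0 : 0 ≤ M₂ := by
    rw [hM₂]
    have h1 : (0:ℝ) < β₂ - s := by linarith
    exact div_nonneg (mul_nonneg hc hCγ.le) h1.le
  set Ktot : ℝ≥0∞ :=
    (ENNReal.ofReal (M₁ ^ qR) * K₁ + ENNReal.ofReal (M₂ ^ qR) * K₂) ^ (1/qR) with hKtot
  have hKtot_top : Ktot ≠ ∞ := by
    rw [hKtot]
    refine ENNReal.rpow_ne_top_of_nonneg (by positivity) ?_
    exact ENNReal.add_ne_top.mpr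
      ⟨ENNReal.mul_ne_top ENNReal.ofReal_ne_top hK₁top,
       ENNReal.mul_ne_top ENNReal.ofReal_ne_top hK₂top⟩
  refine ⟨Ktot.toReal + 1, by positivity, ?_⟩
  intro η hη μ hμ1 hμp hμ0 x
  set F : EuclideanSpace ℝ (Fin d) → ℝ := fun y =>
    c * ∫ t in Ioc (0:ℝ) η, t ^ ((d:ℝ) - s) * (t ^ (-(d:ℝ)) * ψ (‖x - y‖ / t)) / t with hF
  show |∫ y, F y * μ y| ≤ (Ktot.toReal + 1) * (eLpNorm μ p volume).toReal * η ^ (D - s)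
  have hRHS : 0 ≤ (Ktot.toReal + 1) * (eLpNorm μ p volume).toReal * η ^ (D - s) := by
    have := ENNReal.toReal_nonneg (a := eLpNorm μ p volume)
    have := ENNReal.toReal_nonneg (a := Ktot)
    positivity
  -- measurability of F
  have hFm : Measurable F := by
    have hhm : StronglyMeasurable fun r : ℝ =>
        ∫ t in Ioc (0:ℝ) η, t ^ ((d:ℝ) - s) * (t ^ (-(d:ℝ)) * ψ (r / t)) / t := by
      apply StronglyMeasurable.integral_prod_right
      apply Measurable.stronglyMeasurable
      fun_prop
    have hmn : Measurable fun y : EuclideanSpace ℝ (Fin d) => ‖x - y‖ := by fun_prop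
    exact measurable_const.mul (hhm.measurable.comp hmn)
  -- nonnegativity of F
  have hF0 : ∀ y, 0 ≤ F y := by
    intro y
    refine mul_nonneg hc (setIntegral_nonneg measurableSet_Ioc fun t ht => ?_)
    have ht0 : 0 < t := ht.1
    exact div_nonneg (mul_nonneg (Real.rpow_nonneg ht0.le _)
      (mul_nonneg (Real.rpow_nonneg ht0.le _) (hψ0 _))) ht0.le
  -- dominating function
  set G : EuclideanSpace ℝ (Fin d) → ℝ := fun y =>
    if ‖x - y‖ ≤ η then M₁ * η ^ (β₁ - s) * ‖x - y‖ ^ (-β₁)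
    else M₂ * η ^ (β₂ - s) * ‖x - y‖ ^ (-β₂) with hG
  have hG0 : ∀ y, 0 ≤ G y := by
    intro y
    rw [hG]
    dsimp only
    split_ifs
    · have := Real.rpow_nonneg (norm_nonneg (x - y)) (-β₁)
      positivity
    · have := Real.rpow_nonneg (norm_nonneg (x - y)) (-β₂)
      positivity
  have hGm : Measurable G := by
    rw [hG]
    refine Measurable.ite (measurableSet_le (by fun_prop) measurable_const) ?_ ?_
    · fun_prop
    · fun_prop
  have hFG : ∀ᵐ y : EuclideanSpace ℝ (Fin d), F y ≤ G y := by
    have hne : ∀ᵐ y : EuclideanSpace ℝ (Fin d), y ≠ x := by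
      rw [ae_iff]
      convert vol_singleton_zero d hd x using 2
      ext y; simp
    filter_upwards [hne] with y hy
    have hz : 0 < ‖x - y‖ := by
      rw [norm_pos_iff]
      exact sub_ne_zero.mpr (Ne.symm hy)
    rw [hF, hG]
    dsimp only
    split_ifs with hcase
    · have := kernel_bound d s hs ψ hψ0 γ Cγ hCγ hdecay c hc η hη β₁ hβ₁s hβ₁γ _ hz
      calc c * ∫ t in Ioc (0:ℝ) η, t ^ ((d:ℝ) - s) * (t ^ (-(d:ℝ)) * ψ (‖x - y‖ / t)) / t
          ≤ c * Cγ / (β₁ - s) * η ^ (β₁ - s) * ‖x - y‖ ^ (-β₁) := this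
        _ = M₁ * η ^ (β₁ - s) * ‖x - y‖ ^ (-β₁) := by rw [hM₁]
    · have := kernel_bound d s hs ψ hψ0 γ Cγ hCγ hdecay c hc η hη β₂ hβ₂s hβ₂γ _ hz
      calc c * ∫ t in Ioc (0:ℝ) η, t ^ ((d:ℝ) - s) * (t ^ (-(d:ℝ)) * ψ (‖x - y‖ / t)) / t
          ≤ c * Cγ / (β₂ - s) * η ^ (β₂ - s) * ‖x - y‖ ^ (-β₂) := this
        _ = M₂ * η ^ (β₂ - s) * ‖x - y‖ ^ (-β₂) := by rw [hM₂]
  -- bound on eLpNorm of G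
  have hGle : eLpNorm G qE volume ≤ ENNReal.ofReal (η ^ (D - s)) * Ktot := by
    rw [eLpNorm_eq_lintegral_rpow_enorm_toReal hqE0 hqEtop, hqEtoReal]
    set f : EuclideanSpace ℝ (Fin d) → ℝ≥0∞ := fun z =>
      if ‖z‖ ≤ η then ENNReal.ofReal ((M₁ * η ^ (β₁ - s)) ^ qR) * ENNReal.ofReal (‖z‖ ^ (-a))
      else ENNReal.ofReal ((M₂ * η ^ (β₂ - s)) ^ qR) * ENNReal.ofReal (‖z‖ ^ (-b)) with hf
    have hfm : Measurable f := by
      rw [hf]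
      refine Measurable.ite (measurableSet_le measurable_norm measurable_const) ?_ ?_
      · exact measurable_const.mul (ENNReal.measurable_ofReal.comp (by fun_prop))
      · exact measurable_const.mul (ENNReal.measurable_ofReal.comp (by fun_prop))
    have hGf : ∀ y, ‖G y‖ₑ ^ qR = f (x - y) := by
      intro y
      rw [hG, hf]
      dsimp only
      have hn : (0:ℝ) ≤ ‖x - y‖ := norm_nonneg _
      split_ifs with hcase
      · rw [Real.enorm_eq_ofReal
          (mul_nonneg (mul_nonneg hM₁0 (Real.rpow_nonneg hη.le _)) (Real.rpow_nonneg hn _)),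
          ENNReal.ofReal_rpow_of_nonneg
          (mul_nonneg (mul_nonneg hM₁0 (Real.rpow_nonneg hη.le _)) (Real.rpow_nonneg hn _))
          hqR0.le,
          Real.mul_rpow (mul_nonneg hM₁0 (Real.rpow_nonneg hη.le _)) (Real.rpow_nonneg hn _),
          ← Real.rpow_mul hn, show -β₁ * qR = -a by rw [ha]; ring,
          ENNReal.ofReal_mul (Real.rpow_nonneg (mul_nonneg hM₁0 (Real.rpow_nonneg hη.le _)) _)]
      · rw [Real.enorm_eq_ofReal
          (mul_nonneg (mul_nonneg hM₂0 (Real.rpow_nonneg hη.le _)) (Real.rpow_nonneg hn _)),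
          ENNReal.ofReal_rpow_of_nonneg
          (mul_nonneg (mul_nonneg hM₂0 (Real.rpow_nonneg hη.le _)) (Real.rpow_nonneg hn _))
          hqR0.le,
          Real.mul_rpow (mul_nonneg hM₂0 (Real.rpow_nonneg hη.le _)) (Real.rpow_nonneg hn _),
          ← Real.rpow_mul hn, show -β₂ * qR = -b by rw [hb]; ring,
          ENNReal.ofReal_mul (Real.rpow_nonneg (mul_nonneg hM₂0 (Real.rpow_nonneg hη.le _)) _)]
    rw [lintegral_congr hGf,
      (Measure.measurePreserving_sub_left volume x).lintegral_comp hfm]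
    have hS : MeasurableSet {z : EuclideanSpace ℝ (Fin d) | ‖z‖ ≤ η} :=
      measurableSet_le measurable_norm measurable_const
    rw [← lintegral_add_compl f hS]
    have hpart1 : ∫⁻ z in {z : EuclideanSpace ℝ (Fin d) | ‖z‖ ≤ η}, f z ≤
        ENNReal.ofReal ((M₁ * η ^ (β₁ - s)) ^ qR) * (ENNReal.ofReal (η ^ ((d:ℝ) - a)) * K₁) := by
      have he : ∀ z ∈ {z : EuclideanSpace ℝ (Fin d) | ‖z‖ ≤ η}, f z =
          ENNReal.ofReal ((M₁ * η ^ (β₁ - s)) ^ qR) * ENNReal.ofReal (‖z‖ ^ (-a)) := by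
        intro z hz
        rw [hf]
        exact if_pos hz
      rw [setLIntegral_congr_fun hS he,
        lintegral_const_mul' _ _ ENNReal.ofReal_ne_top]
      exact mul_le_mul_right (hK₁ η hη) _
    have hpart2 : ∫⁻ z in {z : EuclideanSpace ℝ (Fin d) | ‖z‖ ≤ η}ᶜ, f z ≤
        ENNReal.ofReal ((M₂ * η ^ (β₂ - s)) ^ qR) * (ENNReal.ofReal (η ^ ((d:ℝ) - b)) * K₂) := by
      have hSc : {z : EuclideanSpace ℝ (Fin d) | ‖z‖ ≤ η}ᶜ =
          {z : EuclideanSpace ℝ (Fin d) | η < ‖z‖} := by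
        ext z; simp [not_le]
      have hS' : MeasurableSet {z : EuclideanSpace ℝ (Fin d) | η < ‖z‖} :=
        measurableSet_lt measurable_const measurable_norm
      have he : ∀ z ∈ {z : EuclideanSpace ℝ (Fin d) | η < ‖z‖}, f z =
          ENNReal.ofReal ((M₂ * η ^ (β₂ - s)) ^ qR) * ENNReal.ofReal (‖z‖ ^ (-b)) := by
        intro z hz
        rw [hf]
        exact if_neg (not_le.mpr hz)
      rw [hSc, setLIntegral_congr_fun hS' he,
        lintegral_const_mul' _ _ ENNReal.ofReal_ne_top]
      exact mul_le_mul_right (hK₂ η hη) _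
    have hcomb1 : ENNReal.ofReal ((M₁ * η ^ (β₁ - s)) ^ qR) *
          (ENNReal.ofReal (η ^ ((d:ℝ) - a)) * K₁)
        = ENNReal.ofReal (η ^ ((d:ℝ) - s * qR)) * (ENNReal.ofReal (M₁ ^ qR) * K₁) := by
      rw [Real.mul_rpow hM₁0 (Real.rpow_nonneg hη.le _), ← Real.rpow_mul hη.le,
        ENNReal.ofReal_mul (Real.rpow_nonneg hM₁0 _)]
      have hee : ENNReal.ofReal (η ^ ((β₁ - s) * qR)) * ENNReal.ofReal (η ^ ((d:ℝ) - a)) =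
          ENNReal.ofReal (η ^ ((d:ℝ) - s * qR)) := by
        rw [← ENNReal.ofReal_mul (Real.rpow_nonneg hη.le _), ← Real.rpow_add hη,
          show (β₁ - s) * qR + ((d:ℝ) - a) = (d:ℝ) - s * qR by rw [ha]; ring]
      calc ENNReal.ofReal (M₁ ^ qR) * ENNReal.ofReal (η ^ ((β₁ - s) * qR)) *
            (ENNReal.ofReal (η ^ ((d:ℝ) - a)) * K₁)
          = (ENNReal.ofReal (η ^ ((β₁ - s) * qR)) * ENNReal.ofReal (η ^ ((d:ℝ) - a))) *
            (ENNReal.ofReal (M₁ ^ qR) * K₁) := by ring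
        _ = ENNReal.ofReal (η ^ ((d:ℝ) - s * qR)) * (ENNReal.ofReal (M₁ ^ qR) * K₁) := by
            rw [hee]
    have hcomb2 : ENNReal.ofReal ((M₂ * η ^ (β₂ - s)) ^ qR) *
          (ENNReal.ofReal (η ^ ((d:ℝ) - b)) * K₂)
        = ENNReal.ofReal (η ^ ((d:ℝ) - s * qR)) * (ENNReal.ofReal (M₂ ^ qR) * K₂) := by
      rw [Real.mul_rpow hM₂0 (Real.rpow_nonneg hη.le _), ← Real.rpow_mul hη.le,
        ENNReal.ofReal_mul (Real.rpow_nonneg hM₂0 _)]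
      have hee : ENNReal.ofReal (η ^ ((β₂ - s) * qR)) * ENNReal.ofReal (η ^ ((d:ℝ) - b)) =
          ENNReal.ofReal (η ^ ((d:ℝ) - s * qR)) := by
        rw [← ENNReal.ofReal_mul (Real.rpow_nonneg hη.le _), ← Real.rpow_add hη,
          show (β₂ - s) * qR + ((d:ℝ) - b) = (d:ℝ) - s * qR by rw [hb]; ring]
      calc ENNReal.ofReal (M₂ ^ qR) * ENNReal.ofReal (η ^ ((β₂ - s) * qR)) *
            (ENNReal.ofReal (η ^ ((d:ℝ) - b)) * K₂)
          = (ENNReal.ofReal (η ^ ((β₂ - s) * qR)) * ENNReal.ofReal (η ^ ((d:ℝ) - b))) *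
            (ENNReal.ofReal (M₂ ^ qR) * K₂) := by ring
        _ = ENNReal.ofReal (η ^ ((d:ℝ) - s * qR)) * (ENNReal.ofReal (M₂ ^ qR) * K₂) := by
            rw [hee]
    have hsum : (∫⁻ z in {z : EuclideanSpace ℝ (Fin d) | ‖z‖ ≤ η}, f z) +
          ∫⁻ z in {z : EuclideanSpace ℝ (Fin d) | ‖z‖ ≤ η}ᶜ, f z ≤
        ENNReal.ofReal (η ^ ((d:ℝ) - s * qR)) *
          (ENNReal.ofReal (M₁ ^ qR) * K₁ + ENNReal.ofReal (M₂ ^ qR) * K₂) := by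
      rw [mul_add]
      exact add_le_add (hpart1.trans_eq hcomb1) (hpart2.trans_eq hcomb2)
    refine le_trans (ENNReal.rpow_le_rpow hsum (by positivity)) ?_
    rw [ENNReal.mul_rpow_of_nonneg _ _ (by positivity), hKtot,
      ENNReal.ofReal_rpow_of_nonneg (Real.rpow_nonneg hη.le _) (by positivity),
      ← Real.rpow_mul hη.le,
      show ((d:ℝ) - s * qR) * (1/qR) = D - s by
        rw [← hqRD]; field_simp]
  -- conclusion
  by_cases hI : Integrable (fun y => F y * μ y) volume
  · have h1 : |∫ y, F y * μ y| ≤ ∫ y, ‖F y * μ y‖ := by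
      rw [← Real.norm_eq_abs]
      exact norm_integral_le_integral_norm _
    have h2 : ∫ y, ‖F y * μ y‖ = (eLpNorm (fun y => F y * μ y) 1 volume).toReal := by
      rw [integral_norm_eq_lintegral_enorm hI.1, eLpNorm_one_eq_lintegral_enorm]
    have hHolder : eLpNorm (fun y => F y * μ y) 1 volume ≤
        eLpNorm F qE volume * eLpNorm μ p volume := by
      have hHT : ENNReal.HolderTriple qE p 1 := ⟨by simpa [one_div] using hconj.symm⟩
      refine (eLpNorm_le_eLpNorm_mul_eLpNorm'_of_norm (hpqr := hHT) hFm.aestronglyMeasurable hμp.1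
        (· * ·) 1 (ae_of_all _ fun y => ?_)).trans_eq (by simp)
      rw [norm_mul]
      simp
    have hFq : eLpNorm F qE volume ≤ eLpNorm G qE volume := by
      refine eLpNorm_mono_ae ?_
      filter_upwards [hFG] with y hy
      rw [Real.norm_eq_abs, Real.norm_eq_abs, abs_of_nonneg (hF0 y), abs_of_nonneg (hG0 y)]
      exact hy
    have hchain : eLpNorm (fun y => F y * μ y) 1 volume ≤
        (ENNReal.ofReal (η ^ (D - s)) * Ktot) * eLpNorm μ p volume :=
      hHolder.trans (mul_le_mul_left (hFq.trans hGle) _)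
    have hne : (ENNReal.ofReal (η ^ (D - s)) * Ktot) * eLpNorm μ p volume ≠ ∞ :=
      ENNReal.mul_ne_top (ENNReal.mul_ne_top ENNReal.ofReal_ne_top hKtot_top) hμp.2.ne
    have h3 : (eLpNorm (fun y => F y * μ y) 1 volume).toReal ≤
        ((ENNReal.ofReal (η ^ (D - s)) * Ktot) * eLpNorm μ p volume).toReal :=
      ENNReal.toReal_mono hne hchain
    rw [ENNReal.toReal_mul, ENNReal.toReal_mul,
      ENNReal.toReal_ofReal (Real.rpow_nonneg hη.le _)] at h3
    have hη' : 0 < η ^ (D - s) := Real.rpow_pos_of_pos hη _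
    have hKnn : 0 ≤ Ktot.toReal := ENNReal.toReal_nonneg
    have hμnn : 0 ≤ (eLpNorm μ p volume).toReal := ENNReal.toReal_nonneg
    calc |∫ y, F y * μ y| ≤ (eLpNorm (fun y => F y * μ y) 1 volume).toReal := h1.trans h2.le
      _ ≤ η ^ (D - s) * Ktot.toReal * (eLpNorm μ p volume).toReal := h3
      _ ≤ (Ktot.toReal + 1) * (eLpNorm μ p volume).toReal * η ^ (D - s) := by nlinarith
  · rw [integral_undef hI]
    simpa using hRHS
end
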